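/- arXiv:2008.03185 — 2 statements merged into one kernel-verified Lean document; each statement's English description precedes it below -/
import Mathlib

section
/- Let ε > 0, let τ_n > 0 satisfy τ_n ≤ 4ε, and let r_n ≥ 0; set b_0^{(n)} := (1+2r_n)/(τ_n(1+r_n)) and b_1^{(n)} := −r_n²/(τ_n(1+r_n)). Then for any periodic grid functions φ^{n−1} and ψ (with ψ := φ^{n−1} − φ^{n−2} in the BDF2 scheme), there exists a unique periodic grid function z satisfying, at every grid point, b_0^{(n)} (z − φ^{n−1}) + b_1^{(n)} ψ + ε Δ_h² z + ∇_h · f(∇_h z) = 0; that is, the variable-step BDF2 scheme for the no-slope-selection MBE equation is uniquely solvable under τ_n ≤ 4ε. -/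
open Finset

/-- Central difference in the first index: `Δ_x v_{ij} = (v_{i+1,j} − v_{i−1,j})/(2h)`. -/
noncomputable def Dx (M : ℕ) (h : ℝ) (v : ZMod M → ZMod M → ℝ) :
    ZMod M → ZMod M → ℝ :=
  fun i j => (v (i + 1) j - v (i - 1) j) / (2 * h)

/-- Central difference in the second index. -/
noncomputable def Dy (M : ℕ) (h : ℝ) (v : ZMod M → ZMod M → ℝ) :
    ZMod M → ZMod M → ℝ :=
  fun i j => (v i (j + 1) - v i (j - 1)) / (2 * h)

/-- Second difference in the first index: `δ_x² v_{ij}`. -/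
noncomputable def Dxx (M : ℕ) (h : ℝ) (v : ZMod M → ZMod M → ℝ) :
    ZMod M → ZMod M → ℝ :=
  fun i j => (v (i + 1) j - 2 * v i j + v (i - 1) j) / h ^ 2

/-- Second difference in the second index: `δ_y² v_{ij}`. -/
noncomputable def Dyy (M : ℕ) (h : ℝ) (v : ZMod M → ZMod M → ℝ) :
    ZMod M → ZMod M → ℝ :=
  fun i j => (v i (j + 1) - 2 * v i j + v i (j - 1)) / h ^ 2

/-- Discrete Laplacian `Δ_h v := δ_x² v + δ_y² v`. -/
noncomputable def lap (M : ℕ) (h : ℝ) (v : ZMod M → ZMod M → ℝ) :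
    ZMod M → ZMod M → ℝ :=
  fun i j => Dxx M h v i j + Dyy M h v i j

/-- Discrete `L²` inner product `⟨v, w⟩ := h² Σ_{i,j} v_{ij} w_{ij}`. -/
noncomputable def gip (M : ℕ) [NeZero M] (h : ℝ) (v w : ZMod M → ZMod M → ℝ) : ℝ :=
  h ^ 2 * ∑ i : ZMod M, ∑ j : ZMod M, v i j * w i j

/-- Discrete `L²` norm. -/
noncomputable def gnorm (M : ℕ) [NeZero M] (h : ℝ) (v : ZMod M → ZMod M → ℝ) : ℝ :=
  Real.sqrt (gip M h v v)

/-- Discrete divergence of the nonlinear force applied to the discrete gradient: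
`∇_h · f(∇_h v)` where `f(u) = u/(1+|u|²)`. -/
noncomputable def divf (M : ℕ) (h : ℝ) (v : ZMod M → ZMod M → ℝ) :
    ZMod M → ZMod M → ℝ :=
  fun i j =>
    Dx M h (fun a b => Dx M h v a b / (1 + (Dx M h v a b) ^ 2 + (Dy M h v a b) ^ 2)) i j
      + Dy M h (fun a b => Dy M h v a b / (1 + (Dx M h v a b) ^ 2 + (Dy M h v a b) ^ 2)) i j


section Helpers
variable {M : ℕ} [NeZero M]

lemma sum_shiftR (c : ZMod M) (f : ZMod M → ℝ) :
    ∑ i : ZMod M, f (i + c) = ∑ i : ZMod M, f i :=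
  Equiv.sum_comp (Equiv.addRight c) f

lemma dshift1 (c : ZMod M) (F : ZMod M → ZMod M → ℝ) :
    ∑ i : ZMod M, ∑ j : ZMod M, F (i + c) j = ∑ i : ZMod M, ∑ j : ZMod M, F i j :=
  sum_shiftR c (fun i => ∑ j, F i j)

lemma dshift2 (c : ZMod M) (F : ZMod M → ZMod M → ℝ) :
    ∑ i : ZMod M, ∑ j : ZMod M, F i (j + c) = ∑ i : ZMod M, ∑ j : ZMod M, F i j :=
  Finset.sum_congr rfl (fun i _ => sum_shiftR c (F i))

lemma keyx1 (u v : ZMod M → ZMod M → ℝ) :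
    ∑ i : ZMod M, ∑ j : ZMod M, u (i+1) j * v i j
      = ∑ i : ZMod M, ∑ j : ZMod M, u i j * v (i-1) j := by
  have := dshift1 (M := M) 1 (fun i j => u i j * v (i-1) j)
  simpa using this

lemma keyx2 (u v : ZMod M → ZMod M → ℝ) :
    ∑ i : ZMod M, ∑ j : ZMod M, u (i-1) j * v i j
      = ∑ i : ZMod M, ∑ j : ZMod M, u i j * v (i+1) j := by
  have := dshift1 (M := M) (-1) (fun i j => u i j * v (i+1) j)
  simpa [sub_eq_add_neg] using this

lemma keyy1 (u v : ZMod M → ZMod M → ℝ) :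
    ∑ i : ZMod M, ∑ j : ZMod M, u i (j+1) * v i j
      = ∑ i : ZMod M, ∑ j : ZMod M, u i j * v i (j-1) := by
  have := dshift2 (M := M) 1 (fun i j => u i j * v i (j-1))
  simpa using this

lemma keyy2 (u v : ZMod M → ZMod M → ℝ) :
    ∑ i : ZMod M, ∑ j : ZMod M, u i (j-1) * v i j
      = ∑ i : ZMod M, ∑ j : ZMod M, u i j * v i (j+1) := by
  have := dshift2 (M := M) (-1) (fun i j => u i j * v i (j+1))
  simpa [sub_eq_add_neg] using this

end Helpers

-- defs copied
section SBP
variable {M : ℕ} [NeZero M] (h : ℝ)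

lemma sbp_x (u v : ZMod M → ZMod M → ℝ) :
    ∑ i : ZMod M, ∑ j : ZMod M, Dx M h u i j * v i j
      = -∑ i : ZMod M, ∑ j : ZMod M, u i j * Dx M h v i j := by
  have e1 : ∀ i j : ZMod M, Dx M h u i j * v i j
      = u (i+1) j * v i j * (2*h)⁻¹ - u (i-1) j * v i j * (2*h)⁻¹ := by
    intro i j; simp only [Dx]; ring
  have e2 : ∀ i j : ZMod M, u i j * Dx M h v i j
      = u i j * v (i+1) j * (2*h)⁻¹ - u i j * v (i-1) j * (2*h)⁻¹ := by
    intro i j; simp only [Dx]; ring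
  simp only [e1, e2, Finset.sum_sub_distrib, ← Finset.sum_mul]
  rw [keyx1, keyx2]
  ring

lemma sbp_y (u v : ZMod M → ZMod M → ℝ) :
    ∑ i : ZMod M, ∑ j : ZMod M, Dy M h u i j * v i j
      = -∑ i : ZMod M, ∑ j : ZMod M, u i j * Dy M h v i j := by
  have e1 : ∀ i j : ZMod M, Dy M h u i j * v i j
      = u i (j+1) * v i j * (2*h)⁻¹ - u i (j-1) * v i j * (2*h)⁻¹ := by
    intro i j; simp only [Dy]; ring
  have e2 : ∀ i j : ZMod M, u i j * Dy M h v i j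
      = u i j * v i (j+1) * (2*h)⁻¹ - u i j * v i (j-1) * (2*h)⁻¹ := by
    intro i j; simp only [Dy]; ring
  simp only [e1, e2, Finset.sum_sub_distrib, ← Finset.sum_mul]
  rw [keyy1, keyy2]
  ring

lemma dxx_selfadj (u v : ZMod M → ZMod M → ℝ) :
    ∑ i : ZMod M, ∑ j : ZMod M, Dxx M h u i j * v i j
      = ∑ i : ZMod M, ∑ j : ZMod M, u i j * Dxx M h v i j := by
  have e1 : ∀ i j : ZMod M, Dxx M h u i j * v i j
      = u (i+1) j * v i j * (h^2)⁻¹ - 2 * (u i j * v i j) * (h^2)⁻¹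
        + u (i-1) j * v i j * (h^2)⁻¹ := by
    intro i j; simp only [Dxx]; ring
  have e2 : ∀ i j : ZMod M, u i j * Dxx M h v i j
      = u i j * v (i+1) j * (h^2)⁻¹ - 2 * (u i j * v i j) * (h^2)⁻¹
        + u i j * v (i-1) j * (h^2)⁻¹ := by
    intro i j; simp only [Dxx]; ring
  simp only [e1, e2, Finset.sum_add_distrib, Finset.sum_sub_distrib, ← Finset.sum_mul]
  rw [keyx1, keyx2]
  ring

lemma dyy_selfadj (u v : ZMod M → ZMod M → ℝ) :
    ∑ i : ZMod M, ∑ j : ZMod M, Dyy M h u i j * v i j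
      = ∑ i : ZMod M, ∑ j : ZMod M, u i j * Dyy M h v i j := by
  have e1 : ∀ i j : ZMod M, Dyy M h u i j * v i j
      = u i (j+1) * v i j * (h^2)⁻¹ - 2 * (u i j * v i j) * (h^2)⁻¹
        + u i (j-1) * v i j * (h^2)⁻¹ := by
    intro i j; simp only [Dyy]; ring
  have e2 : ∀ i j : ZMod M, u i j * Dyy M h v i j
      = u i j * v i (j+1) * (h^2)⁻¹ - 2 * (u i j * v i j) * (h^2)⁻¹
        + u i j * v i (j-1) * (h^2)⁻¹ := by
    intro i j; simp only [Dyy]; ring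
  simp only [e1, e2, Finset.sum_add_distrib, Finset.sum_sub_distrib, ← Finset.sum_mul]
  rw [keyy1, keyy2]
  ring

lemma lap_selfadj (u v : ZMod M → ZMod M → ℝ) :
    ∑ i : ZMod M, ∑ j : ZMod M, lap M h u i j * v i j
      = ∑ i : ZMod M, ∑ j : ZMod M, u i j * lap M h v i j := by
  have e1 : ∀ i j : ZMod M, lap M h u i j * v i j
      = Dxx M h u i j * v i j + Dyy M h u i j * v i j := by
    intro i j; simp only [lap]; ring
  have e2 : ∀ i j : ZMod M, u i j * lap M h v i j
      = u i j * Dxx M h v i j + u i j * Dyy M h v i j := by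
    intro i j; simp only [lap]; ring
  simp only [e1, e2, Finset.sum_add_distrib]
  rw [dxx_selfadj, dyy_selfadj]

lemma dxdx (hne : h ≠ 0) (u : ZMod M → ZMod M → ℝ) (i j : ZMod M) :
    Dx M h (Dx M h u) i j
      = Dxx M h u i j + h^2/4 * Dxx M h (Dxx M h u) i j := by
  simp only [Dx, Dxx, add_sub_cancel_right, sub_add_cancel]
  field_simp
  ring

lemma dydy (hne : h ≠ 0) (u : ZMod M → ZMod M → ℝ) (i j : ZMod M) :
    Dy M h (Dy M h u) i j
      = Dyy M h u i j + h^2/4 * Dyy M h (Dyy M h u) i j := by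
  simp only [Dy, Dyy, add_sub_cancel_right, sub_add_cancel]
  field_simp
  ring

end SBP

set_option maxHeartbeats 1000000 in
lemma lip_mono (a1 a2 b1 b2 : ℝ) :
    (a1/(1+a1^2+a2^2) - b1/(1+b1^2+b2^2))*(a1-b1)
      + (a2/(1+a1^2+a2^2) - b2/(1+b1^2+b2^2))*(a2-b2)
      ≤ (a1-b1)^2 + (a2-b2)^2 := by
  have hDa : (0:ℝ) < 1+a1^2+a2^2 := by positivity
  have hDb : (0:ℝ) < 1+b1^2+b2^2 := by positivity
  have h1 : (a1/(1+a1^2+a2^2) - b1/(1+b1^2+b2^2))*(a1-b1)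
      + (a2/(1+a1^2+a2^2) - b2/(1+b1^2+b2^2))*(a2-b2)
      = ((a1*(1+b1^2+b2^2) - b1*(1+a1^2+a2^2))*(a1-b1)
        + (a2*(1+b1^2+b2^2) - b2*(1+a1^2+a2^2))*(a2-b2))
        / ((1+a1^2+a2^2)*(1+b1^2+b2^2)) := by
    field_simp
  rw [h1, div_le_iff₀ (mul_pos hDa hDb)]
  nlinarith [sq_nonneg (a1^2+a2^2-b1^2-b2^2),
    mul_nonneg (add_nonneg (sq_nonneg (a1-b1)) (sq_nonneg (a2-b2)))
      (add_nonneg (add_nonneg (sq_nonneg a1) (sq_nonneg a2))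
        (add_nonneg (sq_nonneg b1) (sq_nonneg b2))),
    mul_nonneg (add_nonneg (sq_nonneg (a1-b1)) (sq_nonneg (a2-b2)))
      (mul_nonneg (add_nonneg (sq_nonneg a1) (sq_nonneg a2))
        (add_nonneg (sq_nonneg b1) (sq_nonneg b2)))]

lemma loglin (x y : ℝ) : 1/2 * Real.log (1 + x^2 + y^2) ≤ |x| + |y| := by
  have h1 : (0:ℝ) < 1 + x^2 + y^2 := by positivity
  have h2 : 1 + x^2 + y^2 ≤ (1 + |x| + |y|)^2 := by
    nlinarith [abs_nonneg x, abs_nonneg y, sq_abs x, sq_abs y,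
      mul_nonneg (abs_nonneg x) (abs_nonneg y)]
  have h3 : Real.log (1+x^2+y^2) ≤ Real.log ((1+|x|+|y|)^2) := Real.log_le_log h1 h2
  rw [Real.log_pow] at h3
  have h4 : Real.log (1+|x|+|y|) ≤ |x| + |y| := by
    have := Real.log_le_sub_one_of_pos (show (0:ℝ) < 1+|x|+|y| by positivity)
    linarith
  push_cast at h3
  linarith

lemma amgm_cs (ε S0 S2 Y : ℝ) (hε : 0 < ε) (hS0 : 0 ≤ S0) (hS2 : 0 ≤ S2)
    (hY : Y^2 ≤ S0 * S2) : -Y ≤ S0/(4*ε) + ε*S2 := by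
  have h4ε : (0:ℝ) < 4*ε := by linarith
  have key : -(4*ε*Y) ≤ S0 + 4*ε^2*S2 := by
    nlinarith [sq_nonneg (S0 - 4*ε^2*S2),
      mul_nonneg (mul_nonneg hε.le hε.le) (sub_nonneg.2 hY),
      add_nonneg hS0 (by positivity : (0:ℝ) ≤ 4*ε^2*S2)]
  calc -Y = (-(4*ε*Y))/(4*ε) := by field_simp
    _ ≤ (S0 + 4*ε^2*S2)/(4*ε) := by gcongr
    _ = S0/(4*ε) + ε*S2 := by field_simp

lemma scalarHasDeriv (c0 cg ce u u' w w' a a' b b' : ℝ) :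
    HasDerivAt (fun t : ℝ => c0/2*(u+t*u')^2 - cg*(u+t*u') + ce/2*(w+t*w')^2
        - 1/2*Real.log (1+(a+t*a')^2+(b+t*b')^2))
      (c0*(u*u') - cg*u' + ce*(w*w') - (a*a'+b*b')/(1+a^2+b^2)) 0 := by
  have hu : HasDerivAt (fun t : ℝ => u + t*u') u' 0 := by
    simpa using ((hasDerivAt_id (0:ℝ)).mul_const u').const_add u
  have hw : HasDerivAt (fun t : ℝ => w + t*w') w' 0 := by
    simpa using ((hasDerivAt_id (0:ℝ)).mul_const w').const_add w
  have ha : HasDerivAt (fun t : ℝ => a + t*a') a' 0 := by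
    simpa using ((hasDerivAt_id (0:ℝ)).mul_const a').const_add a
  have hb : HasDerivAt (fun t : ℝ => b + t*b') b' 0 := by
    simpa using ((hasDerivAt_id (0:ℝ)).mul_const b').const_add b
  have hu2 : HasDerivAt (fun t : ℝ => (u+t*u')^2) (2*u*u') 0 := by
    simpa using hu.fun_pow 2
  have hw2 : HasDerivAt (fun t : ℝ => (w+t*w')^2) (2*w*w') 0 := by
    simpa using hw.fun_pow 2
  have hin : HasDerivAt (fun t : ℝ => 1+(a+t*a')^2+(b+t*b')^2) (2*a*a'+2*b*b') 0 := by
    simpa using ((ha.fun_pow 2).const_add 1).fun_add (hb.fun_pow 2)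
  have hlog : HasDerivAt (fun t : ℝ => Real.log (1+(a+t*a')^2+(b+t*b')^2))
      ((2*a*a'+2*b*b')/(1+a^2+b^2)) 0 := by
    have hne : (1+(a+(0:ℝ)*a')^2+(b+(0:ℝ)*b')^2) ≠ 0 := by positivity
    simpa using hin.log hne
  have := (((hu2.const_mul (c0/2)).fun_sub (hu.const_mul cg)).fun_add
      (hw2.const_mul (ce/2))).fun_sub (hlog.const_mul (1/2))
  refine this.congr_deriv ?_
  ring

section CS
variable {M : ℕ} [NeZero M]

lemma cs2 (u w : ZMod M → ZMod M → ℝ) :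
    (∑ i : ZMod M, ∑ j : ZMod M, u i j * w i j)^2
      ≤ (∑ i : ZMod M, ∑ j : ZMod M, (u i j)^2)
        * (∑ i : ZMod M, ∑ j : ZMod M, (w i j)^2) := by
  have h := sum_mul_sq_le_sq_mul_sq (Finset.univ : Finset (ZMod M × ZMod M))
    (fun p => u p.1 p.2) (fun p => w p.1 p.2)
  simpa [Fintype.sum_prod_type] using h

lemma dsum_sq_eq_zero {F : ZMod M → ZMod M → ℝ}
    (h : ∑ i : ZMod M, ∑ j : ZMod M, (F i j)^2 = 0) : ∀ i j, F i j = 0 := by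
  intro i j
  have h1 := (Finset.sum_eq_zero_iff_of_nonneg
    (fun i _ => Finset.sum_nonneg (fun j _ => sq_nonneg (F i j)))).1 h i (mem_univ i)
  have h2 := (Finset.sum_eq_zero_iff_of_nonneg
    (fun j _ => sq_nonneg (F i j))).1 h1 j (mem_univ j)
  exact pow_eq_zero_iff (n := 2) (by norm_num) |>.1 h2

lemma indicator_collapse (E : ZMod M → ZMod M → ℝ) (a b : ZMod M) :
    ∑ i : ZMod M, ∑ j : ZMod M,
      E i j * (if i = a then (if j = b then (1:ℝ) else 0) else 0) = E a b := by
  simp [mul_ite, Finset.sum_ite_eq']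
section Lin
variable {M : ℕ} (h : ℝ) (z w : ZMod M → ZMod M → ℝ)

lemma Dx_sub (i j : ZMod M) :
    Dx M h (fun a b => z a b - w a b) i j = Dx M h z i j - Dx M h w i j := by
  simp only [Dx]; ring

lemma Dy_sub (i j : ZMod M) :
    Dy M h (fun a b => z a b - w a b) i j = Dy M h z i j - Dy M h w i j := by
  simp only [Dy]; ring

lemma lap_sub (i j : ZMod M) :
    lap M h (fun a b => z a b - w a b) i j = lap M h z i j - lap M h w i j := by
  simp only [lap, Dxx, Dyy]; ring

end Lin

section GradSq
variable {M : ℕ} [NeZero M]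

lemma gradsq_x (h : ℝ) (hne : h ≠ 0) (u : ZMod M → ZMod M → ℝ) :
    ∑ i : ZMod M, ∑ j : ZMod M, (Dx M h u i j)^2
      = -∑ i : ZMod M, ∑ j : ZMod M, u i j * Dxx M h u i j
        - h^2/4 * ∑ i : ZMod M, ∑ j : ZMod M, (Dxx M h u i j)^2 := by
  have h1 : ∑ i : ZMod M, ∑ j : ZMod M, (Dx M h u i j)^2
      = ∑ i : ZMod M, ∑ j : ZMod M, Dx M h u i j * Dx M h u i j :=
    sum_congr rfl fun i _ => sum_congr rfl fun j _ => by ring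
  rw [h1, sbp_x h u (Dx M h u)]
  have h2 : ∀ i j : ZMod M, u i j * Dx M h (Dx M h u) i j
      = u i j * Dxx M h u i j + h^2/4 * (u i j * Dxx M h (Dxx M h u) i j) := by
    intro i j; rw [dxdx h hne]; ring
  simp only [h2, Finset.sum_add_distrib, ← Finset.mul_sum]
  rw [← dxx_selfadj h u (Dxx M h u)]
  have h3 : ∑ i : ZMod M, ∑ j : ZMod M, Dxx M h u i j * Dxx M h u i j
      = ∑ i : ZMod M, ∑ j : ZMod M, (Dxx M h u i j)^2 :=
    sum_congr rfl fun i _ => sum_congr rfl fun j _ => by ring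
  rw [h3]; ring

lemma gradsq_y (h : ℝ) (hne : h ≠ 0) (u : ZMod M → ZMod M → ℝ) :
    ∑ i : ZMod M, ∑ j : ZMod M, (Dy M h u i j)^2
      = -∑ i : ZMod M, ∑ j : ZMod M, u i j * Dyy M h u i j
        - h^2/4 * ∑ i : ZMod M, ∑ j : ZMod M, (Dyy M h u i j)^2 := by
  have h1 : ∑ i : ZMod M, ∑ j : ZMod M, (Dy M h u i j)^2
      = ∑ i : ZMod M, ∑ j : ZMod M, Dy M h u i j * Dy M h u i j :=
    sum_congr rfl fun i _ => sum_congr rfl fun j _ => by ring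
  rw [h1, sbp_y h u (Dy M h u)]
  have h2 : ∀ i j : ZMod M, u i j * Dy M h (Dy M h u) i j
      = u i j * Dyy M h u i j + h^2/4 * (u i j * Dyy M h (Dyy M h u) i j) := by
    intro i j; rw [dydy h hne]; ring
  simp only [h2, Finset.sum_add_distrib, ← Finset.mul_sum]
  rw [← dyy_selfadj h u (Dyy M h u)]
  have h3 : ∑ i : ZMod M, ∑ j : ZMod M, Dyy M h u i j * Dyy M h u i j
      = ∑ i : ZMod M, ∑ j : ZMod M, (Dyy M h u i j)^2 :=
    sum_congr rfl fun i _ => sum_congr rfl fun j _ => by ring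
  rw [h3]; ring

end GradSq

section Uniq
variable {M : ℕ} [NeZero M]

lemma uniq_sol (h ε τn rn : ℝ) (hhpos : h ≠ 0) (hε : 0 < ε)
    (hτ : 0 < τn) (hτ4ε : τn ≤ 4 * ε) (hrn : 0 ≤ rn)
    (φ ψ z w : ZMod M → ZMod M → ℝ)
    (hz : ∀ i j : ZMod M, (1 + 2 * rn) / (τn * (1 + rn)) * (z i j - φ i j)
        + (-(rn ^ 2) / (τn * (1 + rn))) * ψ i j
        + ε * lap M h (lap M h z) i j + divf M h z i j = 0)
    (hw : ∀ i j : ZMod M, (1 + 2 * rn) / (τn * (1 + rn)) * (w i j - φ i j)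
        + (-(rn ^ 2) / (τn * (1 + rn))) * ψ i j
        + ε * lap M h (lap M h w) i j + divf M h w i j = 0) : z = w := by
  have hτ1r : 0 < τn * (1 + rn) := by nlinarith
  set b0 : ℝ := (1 + 2 * rn) / (τn * (1 + rn)) with hb0def
  have hb0pos : 0 < b0 := div_pos (by linarith) hτ1r
  have hb0ge : 1 / (4 * ε) ≤ b0 := by
    rw [hb0def, div_le_div_iff₀ (by linarith) hτ1r]
    nlinarith
  set e : ZMod M → ZMod M → ℝ := fun a b => z a b - w a b with hedef
  set Fxz : ZMod M → ZMod M → ℝ :=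
    fun a b => Dx M h z a b / (1 + (Dx M h z a b) ^ 2 + (Dy M h z a b) ^ 2) with hFxzdef
  set Fyz : ZMod M → ZMod M → ℝ :=
    fun a b => Dy M h z a b / (1 + (Dx M h z a b) ^ 2 + (Dy M h z a b) ^ 2) with hFyzdef
  set Fxw : ZMod M → ZMod M → ℝ :=
    fun a b => Dx M h w a b / (1 + (Dx M h w a b) ^ 2 + (Dy M h w a b) ^ 2) with hFxwdef
  set Fyw : ZMod M → ZMod M → ℝ :=
    fun a b => Dy M h w a b / (1 + (Dx M h w a b) ^ 2 + (Dy M h w a b) ^ 2) with hFywdef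
  -- pointwise subtracted equation
  have heq : ∀ i j : ZMod M, b0 * e i j
      + ε * (lap M h (lap M h z) i j - lap M h (lap M h w) i j)
      + (divf M h z i j - divf M h w i j) = 0 := by
    intro i j
    have h1 := hz i j
    have h2 := hw i j
    simp only [hedef]
    linear_combination h1 - h2
  -- summed energy identity
  have hsum0 : ∑ i : ZMod M, ∑ j : ZMod M,
      (b0 * (e i j)^2
        + ε * ((lap M h (lap M h z) i j - lap M h (lap M h w) i j) * e i j)
        + (divf M h z i j - divf M h w i j) * e i j) = 0 :=
    Finset.sum_eq_zero fun i _ => Finset.sum_eq_zero fun j _ => by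
      linear_combination (e i j) * heq i j
  simp only [Finset.sum_add_distrib, ← Finset.mul_sum] at hsum0
  -- biharmonic term
  have hA : ∑ i : ZMod M, ∑ j : ZMod M,
      (lap M h (lap M h z) i j - lap M h (lap M h w) i j) * e i j
      = ∑ i : ZMod M, ∑ j : ZMod M, (lap M h e i j)^2 := by
    simp only [sub_mul, Finset.sum_sub_distrib]
    rw [lap_selfadj h (lap M h z) e, lap_selfadj h (lap M h w) e]
    simp only [← Finset.sum_sub_distrib]
    exact Finset.sum_congr rfl fun i _ => Finset.sum_congr rfl fun j _ => by
      simp only [hedef, lap_sub]; ring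
  -- nonlinear term via summation by parts
  have hB : ∑ i : ZMod M, ∑ j : ZMod M,
      (divf M h z i j - divf M h w i j) * e i j
      = -∑ i : ZMod M, ∑ j : ZMod M,
          ((Fxz i j - Fxw i j) * Dx M h e i j + (Fyz i j - Fyw i j) * Dy M h e i j) := by
    have hdz : ∀ i j : ZMod M, divf M h z i j = Dx M h Fxz i j + Dy M h Fyz i j := by
      intro i j; simp only [divf, hFxzdef, hFyzdef]
    have hdw : ∀ i j : ZMod M, divf M h w i j = Dx M h Fxw i j + Dy M h Fyw i j := by
      intro i j; simp only [divf, hFxwdef, hFywdef]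
    have expand : ∀ i j : ZMod M, (divf M h z i j - divf M h w i j) * e i j
        = Dx M h Fxz i j * e i j + Dy M h Fyz i j * e i j
          - (Dx M h Fxw i j * e i j + Dy M h Fyw i j * e i j) := by
      intro i j; rw [hdz, hdw]; ring
    simp only [expand, Finset.sum_add_distrib, Finset.sum_sub_distrib]
    rw [sbp_x h Fxz e, sbp_y h Fyz e, sbp_x h Fxw e, sbp_y h Fyw e]
    simp only [← Finset.sum_add_distrib, ← Finset.sum_sub_distrib, ← Finset.sum_neg_distrib]
    apply Finset.sum_congr rfl fun i _ => Finset.sum_congr rfl fun j _ => ?_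
    ring
  -- Lipschitz/monotone bound on nonlinear term
  have hT : ∑ i : ZMod M, ∑ j : ZMod M,
      ((Fxz i j - Fxw i j) * Dx M h e i j + (Fyz i j - Fyw i j) * Dy M h e i j)
      ≤ ∑ i : ZMod M, ∑ j : ZMod M, ((Dx M h e i j)^2 + (Dy M h e i j)^2) := by
    apply Finset.sum_le_sum; intro i _
    apply Finset.sum_le_sum; intro j _
    have hDxe : Dx M h e i j = Dx M h z i j - Dx M h w i j := by
      simp only [hedef, Dx_sub]
    have hDye : Dy M h e i j = Dy M h z i j - Dy M h w i j := by
      simp only [hedef, Dy_sub]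
    rw [hDxe, hDye, hFxzdef, hFxwdef, hFyzdef, hFywdef]
    exact lip_mono (Dx M h z i j) (Dy M h z i j) (Dx M h w i j) (Dy M h w i j)
  -- gradient square identity
  have hP : ∑ i : ZMod M, ∑ j : ZMod M, ((Dx M h e i j)^2 + (Dy M h e i j)^2)
      = -∑ i : ZMod M, ∑ j : ZMod M, e i j * lap M h e i j
        - h^2/4 * (∑ i : ZMod M, ∑ j : ZMod M, (Dxx M h e i j)^2
          + ∑ i : ZMod M, ∑ j : ZMod M, (Dyy M h e i j)^2) := by
    have hlapdecomp : ∑ i : ZMod M, ∑ j : ZMod M, e i j * lap M h e i j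
        = ∑ i : ZMod M, ∑ j : ZMod M, e i j * Dxx M h e i j
          + ∑ i : ZMod M, ∑ j : ZMod M, e i j * Dyy M h e i j := by
      simp only [← Finset.sum_add_distrib]
      exact Finset.sum_congr rfl fun i _ => Finset.sum_congr rfl fun j _ => by
        simp only [lap]; ring
    simp only [Finset.sum_add_distrib]
    rw [gradsq_x h hhpos e, gradsq_y h hhpos e, hlapdecomp]
    ring
  -- Cauchy-Schwarz and AM-GM
  have hY2 : (∑ i : ZMod M, ∑ j : ZMod M, e i j * lap M h e i j)^2
      ≤ (∑ i : ZMod M, ∑ j : ZMod M, (e i j)^2)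
        * (∑ i : ZMod M, ∑ j : ZMod M, (lap M h e i j)^2) := cs2 e (lap M h e)
  have hS0nn : 0 ≤ ∑ i : ZMod M, ∑ j : ZMod M, (e i j)^2 :=
    Finset.sum_nonneg fun i _ => Finset.sum_nonneg fun j _ => sq_nonneg _
  have hS2nn : 0 ≤ ∑ i : ZMod M, ∑ j : ZMod M, (lap M h e i j)^2 :=
    Finset.sum_nonneg fun i _ => Finset.sum_nonneg fun j _ => sq_nonneg _
  have hKxnn : 0 ≤ ∑ i : ZMod M, ∑ j : ZMod M, (Dxx M h e i j)^2 :=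
    Finset.sum_nonneg fun i _ => Finset.sum_nonneg fun j _ => sq_nonneg _
  have hKynn : 0 ≤ ∑ i : ZMod M, ∑ j : ZMod M, (Dyy M h e i j)^2 :=
    Finset.sum_nonneg fun i _ => Finset.sum_nonneg fun j _ => sq_nonneg _
  have hAM : -(∑ i : ZMod M, ∑ j : ZMod M, e i j * lap M h e i j)
      ≤ (∑ i : ZMod M, ∑ j : ZMod M, (e i j)^2)/(4*ε)
        + ε * (∑ i : ZMod M, ∑ j : ZMod M, (lap M h e i j)^2) :=
    amgm_cs ε _ _ _ hε hS0nn hS2nn hY2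
  -- combine: b0*S0 + ε*S2 = T ≤ P ≤ S0/(4ε) + ε*S2 - h²/4*K
  rw [hA, hB] at hsum0
  have hh2pos : 0 < h^2 := by positivity
  have hb0S0 : (∑ i : ZMod M, ∑ j : ZMod M, (e i j)^2)/(4*ε)
      ≤ b0 * ∑ i : ZMod M, ∑ j : ZMod M, (e i j)^2 := by
    rw [div_eq_mul_inv, mul_comm]
    apply mul_le_mul_of_nonneg_right _ hS0nn
    rw [← one_div]
    exact hb0ge
  have hcK : h^2/4 * (∑ i : ZMod M, ∑ j : ZMod M, (Dxx M h e i j)^2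
      + ∑ i : ZMod M, ∑ j : ZMod M, (Dyy M h e i j)^2) ≤ 0 := by
    linarith [hT, hP, hAM, hsum0, hb0S0]
  have hKzero : (∑ i : ZMod M, ∑ j : ZMod M, (Dxx M h e i j)^2)
      + (∑ i : ZMod M, ∑ j : ZMod M, (Dyy M h e i j)^2) = 0 := by
    by_contra hne
    have hKpos : 0 < (∑ i : ZMod M, ∑ j : ZMod M, (Dxx M h e i j)^2)
        + (∑ i : ZMod M, ∑ j : ZMod M, (Dyy M h e i j)^2) :=
      lt_of_le_of_ne (by linarith) (Ne.symm hne)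
    have := mul_pos (show (0:ℝ) < h^2/4 by positivity) hKpos
    linarith
  have hKx0 : ∑ i : ZMod M, ∑ j : ZMod M, (Dxx M h e i j)^2 = 0 := by linarith
  have hKy0 : ∑ i : ZMod M, ∑ j : ZMod M, (Dyy M h e i j)^2 = 0 := by linarith
  have hDxx0 := dsum_sq_eq_zero hKx0
  have hDyy0 := dsum_sq_eq_zero hKy0
  have hlap0 : ∀ i j : ZMod M, lap M h e i j = 0 := by
    intro i j; simp only [lap, hDxx0 i j, hDyy0 i j, add_zero]
  have hS2zero : ∑ i : ZMod M, ∑ j : ZMod M, (lap M h e i j)^2 = 0 :=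
    Finset.sum_eq_zero fun i _ => Finset.sum_eq_zero fun j _ => by rw [hlap0]; ring
  have hYzero : ∑ i : ZMod M, ∑ j : ZMod M, e i j * lap M h e i j = 0 :=
    Finset.sum_eq_zero fun i _ => Finset.sum_eq_zero fun j _ => by rw [hlap0]; ring
  rw [hYzero, hKx0, hKy0] at hP
  norm_num at hP
  have hb0S0le : b0 * (∑ i : ZMod M, ∑ j : ZMod M, (e i j)^2) ≤ 0 := by
    rw [hS2zero] at hsum0
    linarith [hT, hsum0]
  have hS0zero : ∑ i : ZMod M, ∑ j : ZMod M, (e i j)^2 = 0 := by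
    by_contra hne
    have hpos : 0 < ∑ i : ZMod M, ∑ j : ZMod M, (e i j)^2 :=
      lt_of_le_of_ne hS0nn (Ne.symm hne)
    have := mul_pos hb0pos hpos
    linarith
  have he0 := dsum_sq_eq_zero hS0zero
  funext a b
  have := he0 a b
  simp only [hedef] at this
  linarith

end Uniq

section Exist
variable {M : ℕ} [NeZero M]

lemma Dx_lin (h t : ℝ) (z v : ZMod M → ZMod M → ℝ) (i j : ZMod M) :
    Dx M h (fun a b => z a b + t * v a b) i j = Dx M h z i j + t * Dx M h v i j := by
  simp only [Dx]; ring

lemma Dy_lin (h t : ℝ) (z v : ZMod M → ZMod M → ℝ) (i j : ZMod M) :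
    Dy M h (fun a b => z a b + t * v a b) i j = Dy M h z i j + t * Dy M h v i j := by
  simp only [Dy]; ring

lemma lap_lin (h t : ℝ) (z v : ZMod M → ZMod M → ℝ) (i j : ZMod M) :
    lap M h (fun a b => z a b + t * v a b) i j = lap M h z i j + t * lap M h v i j := by
  simp only [lap, Dxx, Dyy]; ring

lemma normsq (z : ZMod M → ZMod M → ℝ) :
    ‖z‖^2 ≤ ∑ i : ZMod M, ∑ j : ZMod M, (z i j)^2 := by
  have hs : (0:ℝ) ≤ ∑ i : ZMod M, ∑ j : ZMod M, (z i j)^2 :=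
    Finset.sum_nonneg fun i _ => Finset.sum_nonneg fun j _ => sq_nonneg _
  have hnorm : ‖z‖ ≤ Real.sqrt (∑ i : ZMod M, ∑ j : ZMod M, (z i j)^2) := by
    rw [pi_norm_le_iff_of_nonneg (Real.sqrt_nonneg _)]
    intro a
    rw [pi_norm_le_iff_of_nonneg (Real.sqrt_nonneg _)]
    intro b
    rw [Real.norm_eq_abs, ← Real.sqrt_sq_eq_abs (z a b)]
    apply Real.sqrt_le_sqrt
    calc (z a b)^2 ≤ ∑ j : ZMod M, (z a j)^2 :=
          Finset.single_le_sum (fun j _ => sq_nonneg (z a j)) (mem_univ b)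
      _ ≤ ∑ i : ZMod M, ∑ j : ZMod M, (z i j)^2 :=
          Finset.single_le_sum (f := fun i => ∑ j : ZMod M, (z i j)^2)
            (fun i _ => Finset.sum_nonneg fun j _ => sq_nonneg _) (mem_univ a)
  calc ‖z‖^2 ≤ (Real.sqrt (∑ i : ZMod M, ∑ j : ZMod M, (z i j)^2))^2 :=
        pow_le_pow_left₀ (norm_nonneg z) hnorm 2
    _ = _ := Real.sq_sqrt hs

lemma eval_le_norm (z : ZMod M → ZMod M → ℝ) (a b : ZMod M) : |z a b| ≤ ‖z‖ := by
  calc |z a b| = ‖z a b‖ := (Real.norm_eq_abs _).symm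
    _ ≤ ‖z a‖ := norm_le_pi_norm (z a) b
    _ ≤ ‖z‖ := norm_le_pi_norm z a

lemma Dx_abs_le (h : ℝ) (hh : 0 < h) (z : ZMod M → ZMod M → ℝ) (i j : ZMod M) :
    |Dx M h z i j| ≤ ‖z‖ / h := by
  simp only [Dx, abs_div]
  rw [abs_of_pos (by linarith : (0:ℝ) < 2*h)]
  rw [div_le_div_iff₀ (by linarith) hh]
  have h1 : |z (i+1) j - z (i-1) j| ≤ |z (i+1) j| + |z (i-1) j| := by
    rw [sub_eq_add_neg]
    exact (abs_add_le _ _).trans (by rw [abs_neg])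
  have h2 := eval_le_norm z (i+1) j
  have h3 := eval_le_norm z (i-1) j
  nlinarith [abs_nonneg (z (i+1) j - z (i-1) j)]

lemma Dy_abs_le (h : ℝ) (hh : 0 < h) (z : ZMod M → ZMod M → ℝ) (i j : ZMod M) :
    |Dy M h z i j| ≤ ‖z‖ / h := by
  simp only [Dy, abs_div]
  rw [abs_of_pos (by linarith : (0:ℝ) < 2*h)]
  rw [div_le_div_iff₀ (by linarith) hh]
  have h1 : |z i (j+1) - z i (j-1)| ≤ |z i (j+1)| + |z i (j-1)| := by
    rw [sub_eq_add_neg]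
    exact (abs_add_le _ _).trans (by rw [abs_neg])
  have h2 := eval_le_norm z i (j+1)
  have h3 := eval_le_norm z i (j-1)
  nlinarith [abs_nonneg (z i (j+1) - z i (j-1))]

end Exist

section Exist2
variable {M : ℕ} [NeZero M]

set_option maxHeartbeats 1000000 in
lemma exists_sol (h ε c0 : ℝ) (hh : 0 < h) (hε : 0 < ε) (hc0 : 0 < c0)
    (g : ZMod M → ZMod M → ℝ) :
    ∃ z : ZMod M → ZMod M → ℝ, ∀ i j : ZMod M,
      c0 * z i j + ε * lap M h (lap M h z) i j + divf M h z i j = g i j := by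
  classical
  set J : (ZMod M → ZMod M → ℝ) → ℝ := fun z =>
    ∑ i : ZMod M, ∑ j : ZMod M,
      (c0/2*(z i j)^2 - g i j * z i j + ε/2*(lap M h z i j)^2
        - 1/2*Real.log (1 + (Dx M h z i j)^2 + (Dy M h z i j)^2)) with hJdef
  -- continuity
  have cApp : ∀ (a b : ZMod M), Continuous fun z : ZMod M → ZMod M → ℝ => z a b :=
    fun a b => (continuous_apply b).comp (continuous_apply a)
  have cDx : ∀ (a b : ZMod M), Continuous fun z : ZMod M → ZMod M → ℝ => Dx M h z a b := by
    intro a b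
    simp only [Dx]
    exact ((cApp _ _).sub (cApp _ _)).div_const _
  have cDy : ∀ (a b : ZMod M), Continuous fun z : ZMod M → ZMod M → ℝ => Dy M h z a b := by
    intro a b
    simp only [Dy]
    exact ((cApp _ _).sub (cApp _ _)).div_const _
  have cDxx : ∀ (a b : ZMod M), Continuous fun z : ZMod M → ZMod M → ℝ => Dxx M h z a b := by
    intro a b
    simp only [Dxx]
    exact (((cApp _ _).sub (continuous_const.mul (cApp _ _))).add (cApp _ _)).div_const _
  have cDyy : ∀ (a b : ZMod M), Continuous fun z : ZMod M → ZMod M → ℝ => Dyy M h z a b := by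
    intro a b
    simp only [Dyy]
    exact (((cApp _ _).sub (continuous_const.mul (cApp _ _))).add (cApp _ _)).div_const _
  have cLap : ∀ (a b : ZMod M), Continuous fun z : ZMod M → ZMod M → ℝ => lap M h z a b := by
    intro a b
    simp only [lap]
    exact (cDxx a b).add (cDyy a b)
  have hJcont : Continuous J := by
    rw [hJdef]
    apply continuous_finset_sum
    intro i _
    apply continuous_finset_sum
    intro j _
    refine (((continuous_const.mul ((cApp i j).pow 2)).sub
      (continuous_const.mul (cApp i j))).add
      (continuous_const.mul ((cLap i j).pow 2))).sub
      (continuous_const.mul (Continuous.log ?_ ?_))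
    · exact (continuous_const.add ((cDx i j).pow 2)).add ((cDy i j).pow 2)
    · intro z; positivity
  -- coercivity
  set Cg : ℝ := ∑ i : ZMod M, ∑ j : ZMod M, |g i j| with hCgdef
  have hCgnn : 0 ≤ Cg :=
    Finset.sum_nonneg fun i _ => Finset.sum_nonneg fun j _ => abs_nonneg _
  set CM : ℝ := (M:ℝ)^2 * (2/h) with hCMdef
  have hCMnn : 0 ≤ CM := by positivity
  have hJlb : ∀ z : ZMod M → ZMod M → ℝ,
      c0/2 * ‖z‖^2 - (Cg + CM) * ‖z‖ ≤ J z := by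
    intro z
    have hJsplit : J z = ∑ i : ZMod M, ∑ j : ZMod M, (c0/2*(z i j)^2)
        - ∑ i : ZMod M, ∑ j : ZMod M, (g i j * z i j)
        + ∑ i : ZMod M, ∑ j : ZMod M, (ε/2*(lap M h z i j)^2)
        - ∑ i : ZMod M, ∑ j : ZMod M,
            (1/2*Real.log (1 + (Dx M h z i j)^2 + (Dy M h z i j)^2)) := by
      rw [hJdef]
      simp only [Finset.sum_add_distrib, Finset.sum_sub_distrib]
    have t1 : c0/2 * ‖z‖^2 ≤ ∑ i : ZMod M, ∑ j : ZMod M, (c0/2*(z i j)^2) := by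
      have := mul_le_mul_of_nonneg_left (normsq z) (by positivity : (0:ℝ) ≤ c0/2)
      calc c0/2 * ‖z‖^2 ≤ c0/2 * ∑ i : ZMod M, ∑ j : ZMod M, (z i j)^2 := this
        _ = ∑ i : ZMod M, ∑ j : ZMod M, (c0/2*(z i j)^2) := by
            simp only [Finset.mul_sum]
    have t2 : ∑ i : ZMod M, ∑ j : ZMod M, (g i j * z i j) ≤ Cg * ‖z‖ := by
      calc ∑ i : ZMod M, ∑ j : ZMod M, (g i j * z i j)
          ≤ ∑ i : ZMod M, ∑ j : ZMod M, (|g i j| * ‖z‖) := by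
            apply Finset.sum_le_sum; intro i _
            apply Finset.sum_le_sum; intro j _
            calc g i j * z i j ≤ |g i j * z i j| := le_abs_self _
              _ = |g i j| * |z i j| := abs_mul _ _
              _ ≤ |g i j| * ‖z‖ :=
                  mul_le_mul_of_nonneg_left (eval_le_norm z i j) (abs_nonneg _)
        _ = Cg * ‖z‖ := by rw [hCgdef]; simp only [← Finset.sum_mul]
    have t3 : (0:ℝ) ≤ ∑ i : ZMod M, ∑ j : ZMod M, (ε/2*(lap M h z i j)^2) :=
      Finset.sum_nonneg fun i _ => Finset.sum_nonneg fun j _ => by positivity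
    have t4 : ∑ i : ZMod M, ∑ j : ZMod M,
        (1/2*Real.log (1 + (Dx M h z i j)^2 + (Dy M h z i j)^2)) ≤ CM * ‖z‖ := by
      calc ∑ i : ZMod M, ∑ j : ZMod M,
            (1/2*Real.log (1 + (Dx M h z i j)^2 + (Dy M h z i j)^2))
          ≤ ∑ _i : ZMod M, ∑ _j : ZMod M, (2 * (‖z‖/h)) := by
            apply Finset.sum_le_sum; intro i _
            apply Finset.sum_le_sum; intro j _
            have l1 := loglin (Dx M h z i j) (Dy M h z i j)
            have l2 := Dx_abs_le h hh z i j
            have l3 := Dy_abs_le h hh z i j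
            have l4 := le_abs_self (Dx M h z i j)
            have l5 := le_abs_self (Dy M h z i j)
            linarith
        _ = CM * ‖z‖ := by
            simp only [Finset.sum_const, Finset.card_univ, ZMod.card, nsmul_eq_mul,
              hCMdef]
            field_simp
    linarith
  -- a global minimizer exists
  set R : ℝ := max 1 ((2/c0) * (Cg + CM + |J 0| + 1)) with hRdef
  have hR1 : (1:ℝ) ≤ R := le_max_left _ _
  have hR2 : (2/c0) * (Cg + CM + |J 0| + 1) ≤ R := le_max_right _ _
  have hRpos : (0:ℝ) < R := by linarith
  obtain ⟨z0, hz0mem, hz0min⟩ :=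
    (isCompact_closedBall (0 : ZMod M → ZMod M → ℝ) R).exists_isMinOn
      ⟨0, Metric.mem_closedBall_self (by linarith)⟩ hJcont.continuousOn
  have hglobal : ∀ y : ZMod M → ZMod M → ℝ, J z0 ≤ J y := by
    intro y
    by_cases hy : y ∈ Metric.closedBall (0 : ZMod M → ZMod M → ℝ) R
    · exact hz0min hy
    · have hnorm : R < ‖y‖ := by
        simp only [Metric.mem_closedBall, dist_zero_right, not_le] at hy
        exact hy
      have h1 : J z0 ≤ J 0 := hz0min (Metric.mem_closedBall_self (by linarith))
      have hy1 : (1:ℝ) ≤ ‖y‖ := le_trans hR1 hnorm.le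
      have hCX : Cg + CM + |J 0| + 1 ≤ c0/2 * R := by
        have := mul_le_mul_of_nonneg_left hR2 (by positivity : (0:ℝ) ≤ c0/2)
        have heq : c0/2 * ((2/c0) * (Cg + CM + |J 0| + 1)) = Cg + CM + |J 0| + 1 := by
          field_simp
        linarith
      have hy2 : Cg + CM + (|J 0| + 1) ≤ c0/2 * ‖y‖ := by
        have := mul_le_mul_of_nonneg_left hnorm.le (by positivity : (0:ℝ) ≤ c0/2)
        linarith
      have key : |J 0| + 1 ≤ ‖y‖ * (c0/2 * ‖y‖ - (Cg + CM)) := by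
        nlinarith [mul_nonneg (by linarith : (0:ℝ) ≤ ‖y‖ - 1)
          (by linarith [abs_nonneg (J 0)] : (0:ℝ) ≤ c0/2 * ‖y‖ - (Cg + CM))]
      have := hJlb y
      nlinarith [le_abs_self (J 0)]
  -- Euler-Lagrange equation
  set Fx : ZMod M → ZMod M → ℝ :=
    fun a b => Dx M h z0 a b / (1 + (Dx M h z0 a b) ^ 2 + (Dy M h z0 a b) ^ 2) with hFxdef
  set Fy : ZMod M → ZMod M → ℝ :=
    fun a b => Dy M h z0 a b / (1 + (Dx M h z0 a b) ^ 2 + (Dy M h z0 a b) ^ 2) with hFydef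
  have hEL : ∀ v : ZMod M → ZMod M → ℝ,
      ∑ i : ZMod M, ∑ j : ZMod M,
        (c0*(z0 i j * v i j) - g i j * v i j + ε*(lap M h z0 i j * lap M h v i j)
          - (Dx M h z0 i j * Dx M h v i j + Dy M h z0 i j * Dy M h v i j)
            /(1 + (Dx M h z0 i j)^2 + (Dy M h z0 i j)^2)) = 0 := by
    intro v
    have hbody : (fun t : ℝ => J (fun a b => z0 a b + t * v a b))
        = fun t : ℝ => ∑ i : ZMod M, ∑ j : ZMod M,
          (c0/2*(z0 i j + t * v i j)^2 - g i j * (z0 i j + t * v i j)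
            + ε/2*(lap M h z0 i j + t * lap M h v i j)^2
            - 1/2*Real.log (1 + (Dx M h z0 i j + t * Dx M h v i j)^2
              + (Dy M h z0 i j + t * Dy M h v i j)^2)) := by
      funext t
      rw [hJdef]
      refine Finset.sum_congr rfl fun i _ => Finset.sum_congr rfl fun j _ => ?_
      rw [Dx_lin, Dy_lin, lap_lin]
    have hD : HasDerivAt (fun t : ℝ => J (fun a b => z0 a b + t * v a b))
        (∑ i : ZMod M, ∑ j : ZMod M,
          (c0*(z0 i j * v i j) - g i j * v i j + ε*(lap M h z0 i j * lap M h v i j)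
            - (Dx M h z0 i j * Dx M h v i j + Dy M h z0 i j * Dy M h v i j)
              /(1 + (Dx M h z0 i j)^2 + (Dy M h z0 i j)^2))) 0 := by
      rw [hbody]
      exact HasDerivAt.fun_sum fun i _ => HasDerivAt.fun_sum fun j _ =>
        scalarHasDeriv c0 (g i j) ε (z0 i j) (v i j) (lap M h z0 i j) (lap M h v i j)
          (Dx M h z0 i j) (Dx M h v i j) (Dy M h z0 i j) (Dy M h v i j)
    have hz00 : (fun a b => z0 a b + (0:ℝ) * v a b) = z0 := by
      funext a b; simp
    have hmin : IsLocalMin (fun t : ℝ => J (fun a b => z0 a b + t * v a b)) 0 :=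
      Filter.Eventually.of_forall fun t => by
        simp only [hz00]
        exact hglobal _
    exact hmin.hasDerivAt_eq_zero hD
  -- rewrite the Euler-Lagrange identity using adjoints
  have hEL2 : ∀ v : ZMod M → ZMod M → ℝ,
      ∑ i : ZMod M, ∑ j : ZMod M,
        ((c0 * z0 i j - g i j + ε * lap M h (lap M h z0) i j + divf M h z0 i j)
          * v i j) = 0 := by
    intro v
    have h0 := hEL v
    have hpt : ∀ i j : ZMod M,
        c0*(z0 i j * v i j) - g i j * v i j + ε*(lap M h z0 i j * lap M h v i j)
          - (Dx M h z0 i j * Dx M h v i j + Dy M h z0 i j * Dy M h v i j)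
            /(1 + (Dx M h z0 i j)^2 + (Dy M h z0 i j)^2)
        = c0*(z0 i j * v i j) - g i j * v i j + ε*(lap M h z0 i j * lap M h v i j)
          - (Fx i j * Dx M h v i j + Fy i j * Dy M h v i j) := by
      intro i j
      simp only [hFxdef, hFydef]
      ring
    simp only [hpt] at h0
    simp only [Finset.sum_add_distrib, Finset.sum_sub_distrib, ← Finset.mul_sum] at h0
    have hpt2 : ∀ i j : ZMod M,
        (c0 * z0 i j - g i j + ε * lap M h (lap M h z0) i j + divf M h z0 i j) * v i j
        = c0*(z0 i j * v i j) - g i j * v i j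
          + ε*(lap M h (lap M h z0) i j * v i j)
          + (Dx M h Fx i j * v i j + Dy M h Fy i j * v i j) := by
      intro i j
      simp only [divf]
      rw [← hFxdef, ← hFydef]
      ring
    simp only [hpt2, Finset.sum_add_distrib, Finset.sum_sub_distrib,
      ← Finset.mul_sum] at h0 ⊢
    rw [lap_selfadj h (lap M h z0) v, sbp_x h Fx v, sbp_y h Fy v]
    linarith [h0]
  -- pointwise equation via indicator test functions
  refine ⟨z0, fun a b => ?_⟩
  have h0 := hEL2 (fun i j => if i = a then (if j = b then (1:ℝ) else 0) else 0)
  rw [indicator_collapse] at h0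
  linarith [h0]

end Exist2

theorem stmt15 (L : ℝ) (hL : 0 < L) (M : ℕ) [NeZero M] (h : ℝ) (hh : h = L / M)
    (ε τn rn : ℝ) (hε : 0 < ε) (hτ : 0 < τn) (hτ4ε : τn ≤ 4 * ε) (hrn : 0 ≤ rn)
    (φ ψ : ZMod M → ZMod M → ℝ) :
    ∃! z : ZMod M → ZMod M → ℝ, ∀ i j : ZMod M,
      (1 + 2 * rn) / (τn * (1 + rn)) * (z i j - φ i j)
        + (-(rn ^ 2) / (τn * (1 + rn))) * ψ i j
        + ε * lap M h (lap M h z) i j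
        + divf M h z i j = 0 := by
  have hM : (0:ℝ) < (M:ℝ) := by exact_mod_cast Nat.pos_of_ne_zero (NeZero.ne M)
  have hhpos : 0 < h := hh ▸ div_pos hL hM
  have hτ1r : 0 < τn * (1 + rn) := by nlinarith
  have hc0pos : 0 < (1 + 2*rn)/(τn*(1+rn)) := div_pos (by linarith) hτ1r
  obtain ⟨z0, hz0⟩ := exists_sol h ε ((1 + 2*rn)/(τn*(1+rn))) hhpos hε hc0pos
      (fun i j => (1 + 2*rn)/(τn*(1+rn)) * φ i j + (rn^2/(τn*(1+rn))) * ψ i j)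
  have hz0eq : ∀ i j : ZMod M,
      (1 + 2 * rn) / (τn * (1 + rn)) * (z0 i j - φ i j)
        + (-(rn ^ 2) / (τn * (1 + rn))) * ψ i j
        + ε * lap M h (lap M h z0) i j + divf M h z0 i j = 0 := by
    intro i j
    linear_combination hz0 i j
  exact ⟨z0, hz0eq, fun y hy =>
    uniq_sol h ε τn rn hhpos.ne' hε hτ hτ4ε hrn φ ψ y z0 hy hz0eq⟩
end CS
end

section
/- Let ε > 0, let τ_1, …, τ_N be positive time steps with ratios r_1 := 0, r_k := τ_k/τ_{k−1} for 2 ≤ k ≤ N, and let r_{N+1} ≥ 0 be given; assume 0 < r_k < (3+√17)/2 for 2 ≤ k ≤ N, r_{N+1} < (3+√17)/2, and the time-step restriction τ_n ≤ 4ε · min{ 1, (2+4r_n−r_n²)/(1+r_n) − r_{n+1}/(1+r_{n+1}) } for 1 ≤ n ≤ N. Let periodic grid functions φ^0, φ^1, …, φ^N satisfy the variable-step BDF2 scheme D_2 φ^n + ε Δ_h² φ^n + ∇_h · f(∇_h φ^n) = 0 at every grid point for 1 ≤ n ≤ N, where D_2 φ^n := Σ_{k=1}^{n} b_{n−k}^{(n)}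 (φ^k − φ^{k−1}). Define the discrete energy E[φ] := (ε/2)‖Δ_h φ‖² − (h²/2) Σ_{i,j} ln(1 + |∇_h φ_{ij}|²) and the modified energy ℰ[φ^n] := E[φ^n] + r_{n+1}/(2(1+r_{n+1})τ_n) ‖φ^n − φ^{n−1}‖² for 1 ≤ n ≤ N, with ℰ[φ^0] := E[φ^0]. Then ℰ[φ^n] ≤ ℰ[φ^{n−1}] for all 1 ≤ n ≤ N; in particular ℰ[φ^n] ≤ E[φ^0]. -/
open Finset

/-- BDF2 kernels `b_j^{(n)}` (assuming `r 1 = 0`, so the `n = 1` case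
`b_0^{(1)} = 1/τ_1` is subsumed by the general formula). -/
noncomputable def bk (τ r : ℕ → ℝ) (n j : ℕ) : ℝ :=
  if j = 0 then (1 + 2 * r n) / (τ n * (1 + r n))
  else if j = 1 then -(r n) ^ 2 / (τ n * (1 + r n))
  else 0

/-- The variable-step BDF2 formula applied to a sequence of grid functions. -/
noncomputable def D2g (M : ℕ) (τ r : ℕ → ℝ) (φ : ℕ → ZMod M → ZMod M → ℝ)
    (n : ℕ) : ZMod M → ZMod M → ℝ :=
  fun i j => ∑ k ∈ Finset.Icc 1 n, bk τ r n (n - k) * (φ k i j - φ (k - 1) i j)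

/-- Discrete energy `E[φ] := (ε/2)‖Δ_h φ‖² − (h²/2) Σ_{i,j} ln(1+|∇_h φ_{ij}|²)`. -/
noncomputable def En (M : ℕ) [NeZero M] (h ε : ℝ) (v : ZMod M → ZMod M → ℝ) : ℝ :=
  (ε / 2) * gip M h (lap M h v) (lap M h v)
    - (h ^ 2 / 2) * ∑ i : ZMod M, ∑ j : ZMod M,
        Real.log (1 + (Dx M h v i j) ^ 2 + (Dy M h v i j) ^ 2)

/-- Modified discrete energy `ℰ[φ^n]`, with `ℰ[φ^0] := E[φ^0]`. -/
noncomputable def calE (M : ℕ) [NeZero M] (h ε : ℝ) (τ r : ℕ → ℝ)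
    (φ : ℕ → ZMod M → ZMod M → ℝ) (n : ℕ) : ℝ :=
  if n = 0 then En M h ε (φ 0)
  else En M h ε (φ n)
    + r (n + 1) / (2 * (1 + r (n + 1)) * τ n)
        * gip M h (fun i j => φ n i j - φ (n - 1) i j)
            (fun i j => φ n i j - φ (n - 1) i j)

lemma sum_shift {M : ℕ} [NeZero M] (g : ZMod M → ℝ) (c : ZMod M) :
    ∑ i : ZMod M, g (i + c) = ∑ i, g i :=
  Fintype.sum_equiv (Equiv.addRight c) _ _ (fun _ => rfl)
lemma pair_shift {M : ℕ} [NeZero M] (u w : ZMod M → ZMod M → ℝ) (c : ZMod M) :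
    ∑ i : ZMod M, ∑ j : ZMod M, u (i + c) j * w i j
      = ∑ i : ZMod M, ∑ j : ZMod M, u i j * w (i - c) j := by
  have h1 := sum_shift (M := M) (fun i => ∑ j : ZMod M, u (i + c) j * w i j) (-c)
  simp only [neg_add_cancel_right, ← sub_eq_add_neg] at h1
  rw [← h1]
  apply Finset.sum_congr rfl; intro i _
  apply Finset.sum_congr rfl; intro j _
  rw [sub_add_cancel]
lemma pair_shift_y {M : ℕ} [NeZero M] (u w : ZMod M → ZMod M → ℝ) (c : ZMod M) :
    ∑ i : ZMod M, ∑ j : ZMod M, u i (j + c) * w i j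
      = ∑ i : ZMod M, ∑ j : ZMod M, u i j * w i (j - c) := by
  rw [Finset.sum_comm]
  rw [pair_shift (fun j i => u i j) (fun j i => w i j) c]
  exact Finset.sum_comm
lemma pair_shift' {M : ℕ} [NeZero M] (u w : ZMod M → ZMod M → ℝ) (c : ZMod M) :
    ∑ i : ZMod M, ∑ j : ZMod M, u (i - c) j * w i j
      = ∑ i : ZMod M, ∑ j : ZMod M, u i j * w (i + c) j := by
  have := pair_shift (M := M) u w (-c)
  simpa [sub_eq_add_neg] using this
lemma pair_shift_y' {M : ℕ} [NeZero M] (u w : ZMod M → ZMod M → ℝ) (c : ZMod M) :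
    ∑ i : ZMod M, ∑ j : ZMod M, u i (j - c) * w i j
      = ∑ i : ZMod M, ∑ j : ZMod M, u i j * w i (j + c) := by
  have := pair_shift_y (M := M) u w (-c)
  simpa [sub_eq_add_neg] using this
lemma sum2_sub {M : ℕ} [NeZero M] (f g : ZMod M → ZMod M → ℝ) :
    ∑ i : ZMod M, ∑ j : ZMod M, (f i j - g i j)
      = (∑ i : ZMod M, ∑ j : ZMod M, f i j) - ∑ i : ZMod M, ∑ j : ZMod M, g i j := by
  simp [Finset.sum_sub_distrib]
lemma sum2_add {M : ℕ} [NeZero M] (f g : ZMod M → ZMod M → ℝ) :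
    ∑ i : ZMod M, ∑ j : ZMod M, (f i j + g i j)
      = (∑ i : ZMod M, ∑ j : ZMod M, f i j) + ∑ i : ZMod M, ∑ j : ZMod M, g i j := by
  simp [Finset.sum_add_distrib]
lemma sum2_congr {M : ℕ} [NeZero M] {f g : ZMod M → ZMod M → ℝ}
    (H : ∀ i j, f i j = g i j) :
    ∑ i : ZMod M, ∑ j : ZMod M, f i j = ∑ i : ZMod M, ∑ j : ZMod M, g i j := by
  apply Finset.sum_congr rfl; intro i _
  apply Finset.sum_congr rfl; intro j _
  exact H i j
/-- skew-adjointness of `Dx`. -/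
lemma Tdx {M : ℕ} [NeZero M] (h : ℝ) (u w : ZMod M → ZMod M → ℝ) :
    ∑ i : ZMod M, ∑ j : ZMod M, Dx M h u i j * w i j
      = -∑ i : ZMod M, ∑ j : ZMod M, u i j * Dx M h w i j := by
  have L : ∑ i : ZMod M, ∑ j : ZMod M, Dx M h u i j * w i j
      = (∑ i : ZMod M, ∑ j : ZMod M, u (i + 1) j * (w i j / (2 * h)))
        - ∑ i : ZMod M, ∑ j : ZMod M, u (i - 1) j * (w i j / (2 * h)) := by
    rw [← sum2_sub]; exact sum2_congr fun i j => by simp [Dx]; ring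
  rw [L, pair_shift, pair_shift']
  rw [← sum2_sub,
    sum2_congr (g := fun i j => -(u i j * Dx M h w i j))
      (fun i j => by simp [Dx]; ring)]
  simp
lemma Tdy {M : ℕ} [NeZero M] (h : ℝ) (u w : ZMod M → ZMod M → ℝ) :
    ∑ i : ZMod M, ∑ j : ZMod M, Dy M h u i j * w i j
      = -∑ i : ZMod M, ∑ j : ZMod M, u i j * Dy M h w i j := by
  have L : ∑ i : ZMod M, ∑ j : ZMod M, Dy M h u i j * w i j
      = (∑ i : ZMod M, ∑ j : ZMod M, u i (j + 1) * (w i j / (2 * h)))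
        - ∑ i : ZMod M, ∑ j : ZMod M, u i (j - 1) * (w i j / (2 * h)) := by
    rw [← sum2_sub]; exact sum2_congr fun i j => by simp [Dy]; ring
  rw [L, pair_shift_y, pair_shift_y']
  rw [← sum2_sub,
    sum2_congr (g := fun i j => -(u i j * Dy M h w i j))
      (fun i j => by simp [Dy]; ring)]
  simp
lemma sum2_shift_x {M : ℕ} [NeZero M] (F : ZMod M → ZMod M → ℝ) (c : ZMod M) :
    ∑ i : ZMod M, ∑ j : ZMod M, F (i + c) j = ∑ i : ZMod M, ∑ j : ZMod M, F i j := by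
  have := pair_shift (M := M) F (fun _ _ => (1:ℝ)) c
  simpa using this
lemma sum2_shift_y {M : ℕ} [NeZero M] (F : ZMod M → ZMod M → ℝ) (c : ZMod M) :
    ∑ i : ZMod M, ∑ j : ZMod M, F i (j + c) = ∑ i : ZMod M, ∑ j : ZMod M, F i j := by
  have := pair_shift_y (M := M) F (fun _ _ => (1:ℝ)) c
  simpa using this
/-- self-adjointness of `Dxx`. -/
lemma Txx {M : ℕ} [NeZero M] (h : ℝ) (u w : ZMod M → ZMod M → ℝ) :
    ∑ i : ZMod M, ∑ j : ZMod M, Dxx M h u i j * w i j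
      = ∑ i : ZMod M, ∑ j : ZMod M, u i j * Dxx M h w i j := by
  have L : ∑ i : ZMod M, ∑ j : ZMod M, Dxx M h u i j * w i j
      = ((∑ i : ZMod M, ∑ j : ZMod M, u (i + 1) j * (w i j / h ^ 2))
          - ∑ i : ZMod M, ∑ j : ZMod M, 2 * u i j * (w i j / h ^ 2))
        + ∑ i : ZMod M, ∑ j : ZMod M, u (i - 1) j * (w i j / h ^ 2) := by
    rw [← sum2_sub, ← sum2_add]; exact sum2_congr fun i j => by simp [Dxx]; ring
  rw [L, pair_shift, pair_shift']
  rw [← sum2_sub, ← sum2_add]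
  exact sum2_congr fun i j => by simp [Dxx]; ring
lemma Tyy {M : ℕ} [NeZero M] (h : ℝ) (u w : ZMod M → ZMod M → ℝ) :
    ∑ i : ZMod M, ∑ j : ZMod M, Dyy M h u i j * w i j
      = ∑ i : ZMod M, ∑ j : ZMod M, u i j * Dyy M h w i j := by
  have L : ∑ i : ZMod M, ∑ j : ZMod M, Dyy M h u i j * w i j
      = ((∑ i : ZMod M, ∑ j : ZMod M, u i (j + 1) * (w i j / h ^ 2))
          - ∑ i : ZMod M, ∑ j : ZMod M, 2 * u i j * (w i j / h ^ 2))
        + ∑ i : ZMod M, ∑ j : ZMod M, u i (j - 1) * (w i j / h ^ 2) := by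
    rw [← sum2_sub, ← sum2_add]; exact sum2_congr fun i j => by simp [Dyy]; ring
  rw [L, pair_shift_y, pair_shift_y']
  rw [← sum2_sub, ← sum2_add]
  exact sum2_congr fun i j => by simp [Dyy]; ring
lemma lap_adj {M : ℕ} [NeZero M] (h : ℝ) (u w : ZMod M → ZMod M → ℝ) :
    ∑ i : ZMod M, ∑ j : ZMod M, lap M h u i j * w i j
      = ∑ i : ZMod M, ∑ j : ZMod M, u i j * lap M h w i j := by
  have L : ∑ i : ZMod M, ∑ j : ZMod M, lap M h u i j * w i j
      = (∑ i : ZMod M, ∑ j : ZMod M, Dxx M h u i j * w i j)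
        + ∑ i : ZMod M, ∑ j : ZMod M, Dyy M h u i j * w i j := by
    rw [← sum2_add]; exact sum2_congr fun i j => by simp [lap]; ring
  rw [L, Txx, Tyy, ← sum2_add]
  exact sum2_congr fun i j => by simp [lap]; ring
lemma sum2_cmul {M : ℕ} [NeZero M] (c : ℝ) (f : ZMod M → ZMod M → ℝ) :
    ∑ i : ZMod M, ∑ j : ZMod M, c * f i j = c * ∑ i : ZMod M, ∑ j : ZMod M, f i j := by
  simp [Finset.mul_sum]
lemma sum2_div {M : ℕ} [NeZero M] (c : ℝ) (f : ZMod M → ZMod M → ℝ) :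
    ∑ i : ZMod M, ∑ j : ZMod M, f i j / c = (∑ i : ZMod M, ∑ j : ZMod M, f i j) / c := by
  simp [Finset.sum_div]
lemma sq_diff_x {M : ℕ} [NeZero M] (ψ : ZMod M → ZMod M → ℝ) :
    ∑ i : ZMod M, ∑ j : ZMod M, (ψ (i + 1) j - ψ i j) ^ 2
      = 2 * (∑ i : ZMod M, ∑ j : ZMod M, ψ i j ^ 2)
        - 2 * ∑ i : ZMod M, ∑ j : ZMod M, ψ (i + 1) j * ψ i j := by
  rw [sum2_congr (g := fun i j => (ψ (i+1) j ^ 2 + ψ i j ^ 2)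
        - 2 * (ψ (i+1) j * ψ i j)) (fun i j => by ring),
    sum2_sub, sum2_add, sum2_cmul, sum2_shift_x (fun i j => ψ i j ^ 2) 1]
  ring
lemma sq_diff_x' {M : ℕ} [NeZero M] (ψ : ZMod M → ZMod M → ℝ) :
    ∑ i : ZMod M, ∑ j : ZMod M, (ψ i j - ψ (i - 1) j) ^ 2
      = 2 * (∑ i : ZMod M, ∑ j : ZMod M, ψ i j ^ 2)
        - 2 * ∑ i : ZMod M, ∑ j : ZMod M, ψ (i + 1) j * ψ i j := by
  have := sum2_shift_x (M := M) (fun i j => (ψ i j - ψ (i - 1) j) ^ 2) 1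
  simp only [add_sub_cancel_right] at this
  rw [← this, sq_diff_x]
lemma sq_diff_y {M : ℕ} [NeZero M] (ψ : ZMod M → ZMod M → ℝ) :
    ∑ i : ZMod M, ∑ j : ZMod M, (ψ i (j + 1) - ψ i j) ^ 2
      = 2 * (∑ i : ZMod M, ∑ j : ZMod M, ψ i j ^ 2)
        - 2 * ∑ i : ZMod M, ∑ j : ZMod M, ψ i (j + 1) * ψ i j := by
  rw [sum2_congr (g := fun i j => (ψ i (j+1) ^ 2 + ψ i j ^ 2)
        - 2 * (ψ i (j+1) * ψ i j)) (fun i j => by ring),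
    sum2_sub, sum2_add, sum2_cmul, sum2_shift_y (fun i j => ψ i j ^ 2) 1]
  ring
lemma sq_diff_y' {M : ℕ} [NeZero M] (ψ : ZMod M → ZMod M → ℝ) :
    ∑ i : ZMod M, ∑ j : ZMod M, (ψ i j - ψ i (j - 1)) ^ 2
      = 2 * (∑ i : ZMod M, ∑ j : ZMod M, ψ i j ^ 2)
        - 2 * ∑ i : ZMod M, ∑ j : ZMod M, ψ i (j + 1) * ψ i j := by
  have := sum2_shift_y (M := M) (fun i j => (ψ i j - ψ i (j - 1)) ^ 2) 1
  simp only [add_sub_cancel_right] at this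
  rw [← this, sq_diff_y]
lemma gx1 {M : ℕ} [NeZero M] {h : ℝ} (hh : h ≠ 0) (ψ : ZMod M → ZMod M → ℝ) :
    ∑ i : ZMod M, ∑ j : ZMod M, (Dx M h ψ i j) ^ 2
      ≤ (2 * (∑ i : ZMod M, ∑ j : ZMod M, ψ i j ^ 2)
          - 2 * ∑ i : ZMod M, ∑ j : ZMod M, ψ (i + 1) j * ψ i j) / h ^ 2 := by
  have h4 : (0:ℝ) < 4 * h ^ 2 := by positivity
  have step : ∑ i : ZMod M, ∑ j : ZMod M, (Dx M h ψ i j) ^ 2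
      ≤ ∑ i : ZMod M, ∑ j : ZMod M,
          (2 * (ψ (i+1) j - ψ i j) ^ 2 + 2 * (ψ i j - ψ (i-1) j) ^ 2) / (4 * h ^ 2) := by
    apply Finset.sum_le_sum; intro i _
    apply Finset.sum_le_sum; intro j _
    have hd : Dx M h ψ i j ^ 2 = (ψ (i+1) j - ψ (i-1) j) ^ 2 / (4 * h ^ 2) := by
      simp only [Dx, div_pow]; ring_nf
    rw [hd, div_le_div_iff₀ h4 h4]
    nlinarith [sq_nonneg (ψ (i+1) j - 2 * ψ i j + ψ (i-1) j)]
  refine step.trans ?_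
  rw [sum2_div, sum2_add, sum2_cmul, sum2_cmul, sq_diff_x, sq_diff_x']
  rw [div_le_div_iff₀ h4 (by positivity)]
  exact le_of_eq (by ring)
lemma gy1 {M : ℕ} [NeZero M] {h : ℝ} (hh : h ≠ 0) (ψ : ZMod M → ZMod M → ℝ) :
    ∑ i : ZMod M, ∑ j : ZMod M, (Dy M h ψ i j) ^ 2
      ≤ (2 * (∑ i : ZMod M, ∑ j : ZMod M, ψ i j ^ 2)
          - 2 * ∑ i : ZMod M, ∑ j : ZMod M, ψ i (j + 1) * ψ i j) / h ^ 2 := by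
  have h4 : (0:ℝ) < 4 * h ^ 2 := by positivity
  have step : ∑ i : ZMod M, ∑ j : ZMod M, (Dy M h ψ i j) ^ 2
      ≤ ∑ i : ZMod M, ∑ j : ZMod M,
          (2 * (ψ i (j+1) - ψ i j) ^ 2 + 2 * (ψ i j - ψ i (j-1)) ^ 2) / (4 * h ^ 2) := by
    apply Finset.sum_le_sum; intro i _
    apply Finset.sum_le_sum; intro j _
    have hd : Dy M h ψ i j ^ 2 = (ψ i (j+1) - ψ i (j-1)) ^ 2 / (4 * h ^ 2) := by
      simp only [Dy, div_pow]; ring_nf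
    rw [hd, div_le_div_iff₀ h4 h4]
    nlinarith [sq_nonneg (ψ i (j+1) - 2 * ψ i j + ψ i (j-1))]
  refine step.trans ?_
  rw [sum2_div, sum2_add, sum2_cmul, sum2_cmul, sq_diff_y, sq_diff_y']
  rw [div_le_div_iff₀ h4 (by positivity)]
  exact le_of_eq (by ring)
lemma e_prev_x {M : ℕ} [NeZero M] (ψ : ZMod M → ZMod M → ℝ) :
    ∑ i : ZMod M, ∑ j : ZMod M, ψ (i - 1) j * ψ i j
      = ∑ i : ZMod M, ∑ j : ZMod M, ψ (i + 1) j * ψ i j := by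
  rw [pair_shift' ψ ψ 1]; exact sum2_congr fun i j => mul_comm _ _
lemma e_prev_y {M : ℕ} [NeZero M] (ψ : ZMod M → ZMod M → ℝ) :
    ∑ i : ZMod M, ∑ j : ZMod M, ψ i (j - 1) * ψ i j
      = ∑ i : ZMod M, ∑ j : ZMod M, ψ i (j + 1) * ψ i j := by
  rw [pair_shift_y' ψ ψ 1]; exact sum2_congr fun i j => mul_comm _ _
lemma gx2 {M : ℕ} [NeZero M] (h : ℝ) (ψ : ZMod M → ZMod M → ℝ) :
    ∑ i : ZMod M, ∑ j : ZMod M, (-(Dxx M h ψ i j) * ψ i j)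
      = (2 * (∑ i : ZMod M, ∑ j : ZMod M, ψ i j ^ 2)
          - 2 * ∑ i : ZMod M, ∑ j : ZMod M, ψ (i + 1) j * ψ i j) / h ^ 2 := by
  rw [sum2_congr (g := fun i j =>
        ((2 * ψ i j ^ 2 - ψ (i+1) j * ψ i j) - ψ (i-1) j * ψ i j) / h ^ 2)
      (fun i j => by simp only [Dxx]; ring), sum2_div]
  congr 1
  rw [sum2_sub, sum2_sub, sum2_cmul, e_prev_x]
  ring
lemma gy2 {M : ℕ} [NeZero M] (h : ℝ) (ψ : ZMod M → ZMod M → ℝ) :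
    ∑ i : ZMod M, ∑ j : ZMod M, (-(Dyy M h ψ i j) * ψ i j)
      = (2 * (∑ i : ZMod M, ∑ j : ZMod M, ψ i j ^ 2)
          - 2 * ∑ i : ZMod M, ∑ j : ZMod M, ψ i (j + 1) * ψ i j) / h ^ 2 := by
  rw [sum2_congr (g := fun i j =>
        ((2 * ψ i j ^ 2 - ψ i (j+1) * ψ i j) - ψ i (j-1) * ψ i j) / h ^ 2)
      (fun i j => by simp only [Dyy]; ring), sum2_div]
  congr 1
  rw [sum2_sub, sum2_sub, sum2_cmul, e_prev_y]
  ring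
/-- Discrete gradient bound: `‖∇ψ‖² ≤ ⟨−Δψ, ψ⟩` (without the `h²` factor). -/
lemma grad_bound {M : ℕ} [NeZero M] {h : ℝ} (hh : h ≠ 0) (ψ : ZMod M → ZMod M → ℝ) :
    ∑ i : ZMod M, ∑ j : ZMod M, ((Dx M h ψ i j) ^ 2 + (Dy M h ψ i j) ^ 2)
      ≤ ∑ i : ZMod M, ∑ j : ZMod M, (-(lap M h ψ i j) * ψ i j) := by
  rw [sum2_add,
    sum2_congr (f := fun i j => -(lap M h ψ i j) * ψ i j)
      (g := fun i j => (-(Dxx M h ψ i j) * ψ i j) + (-(Dyy M h ψ i j) * ψ i j))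
      (fun i j => by simp only [lap]; ring),
    sum2_add, gx2, gy2]
  exact add_le_add (gx1 hh ψ) (gy1 hh ψ)
/-- Pointwise concavity estimate for the logarithmic term. -/
lemma logineq (a b c d : ℝ) :
    Real.log (1 + a ^ 2 + b ^ 2) - Real.log (1 + c ^ 2 + d ^ 2)
      ≤ -(2 * (c / (1 + c ^ 2 + d ^ 2) * (c - a) + d / (1 + c ^ 2 + d ^ 2) * (d - b)))
        + ((c - a) ^ 2 + (d - b) ^ 2) := by
  have hC : (0:ℝ) < 1 + c ^ 2 + d ^ 2 := by positivity
  have hA : (0:ℝ) < 1 + a ^ 2 + b ^ 2 := by positivity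
  have hlog : Real.log (1 + a ^ 2 + b ^ 2) - Real.log (1 + c ^ 2 + d ^ 2)
      ≤ ((1 + a ^ 2 + b ^ 2) - (1 + c ^ 2 + d ^ 2)) / (1 + c ^ 2 + d ^ 2) := by
    rw [← Real.log_div (ne_of_gt hA) (ne_of_gt hC)]
    have h1 := Real.log_le_sub_one_of_pos (div_pos hA hC)
    have h2 : (1 + a ^ 2 + b ^ 2) / (1 + c ^ 2 + d ^ 2) - 1
        = ((1 + a ^ 2 + b ^ 2) - (1 + c ^ 2 + d ^ 2)) / (1 + c ^ 2 + d ^ 2) := by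
      field_simp
    linarith [h1, h2.le, h2.ge]
  refine hlog.trans ?_
  have key : ((1 + a ^ 2 + b ^ 2) - (1 + c ^ 2 + d ^ 2)) / (1 + c ^ 2 + d ^ 2)
      = -(2 * (c / (1 + c ^ 2 + d ^ 2) * (c - a) + d / (1 + c ^ 2 + d ^ 2) * (d - b)))
        + ((c - a) ^ 2 + (d - b) ^ 2) / (1 + c ^ 2 + d ^ 2) := by
    field_simp
    ring
  rw [key]
  have hd : ((c - a) ^ 2 + (d - b) ^ 2) / (1 + c ^ 2 + d ^ 2)
      ≤ (c - a) ^ 2 + (d - b) ^ 2 :=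
    div_le_self (by positivity) (by nlinarith [sq_nonneg c, sq_nonneg d])
  linarith
lemma onestep {M : ℕ} [NeZero M] {h ε : ℝ} (hh : h ≠ 0) (hε : 0 < ε)
    (u v w : ZMod M → ZMod M → ℝ) (b0 b1 : ℝ)
    (hsch : ∀ i j : ZMod M,
      (b0 * (u i j - v i j) + b1 * (v i j - w i j))
        + ε * lap M h (lap M h u) i j + divf M h u i j = 0) :
    En M h ε u - En M h ε v
      ≤ h ^ 2 * (-(b0 * (∑ i : ZMod M, ∑ j : ZMod M, (u i j - v i j) * (u i j - v i j))
            + b1 * (∑ i : ZMod M, ∑ j : ZMod M, (v i j - w i j) * (u i j - v i j)))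
          + (∑ i : ZMod M, ∑ j : ZMod M, (u i j - v i j) * (u i j - v i j)) / (8 * ε)) := by
  have hps : ∀ i j : ZMod M, ((b0 * ((u i j - v i j) * (u i j - v i j)) + b1 * ((v i j - w i j) * (u i j - v i j))) + ε * (lap M h (lap M h u) i j * (u i j - v i j))) + divf M h u i j * (u i j - v i j) = 0 := by
    intro i j
    linear_combination (u i j - v i j) * hsch i j
  have h1 : (b0 * (∑ i : ZMod M, ∑ j : ZMod M, (u i j - v i j) * (u i j - v i j)) + b1 * (∑ i : ZMod M, ∑ j : ZMod M, (v i j - w i j) * (u i j - v i j))) + ε * (∑ i : ZMod M, ∑ j : ZMod M, lap M h (lap M h u) i j * (u i j - v i j)) + (∑ i : ZMod M, ∑ j : ZMod M, divf M h u i j * (u i j - v i j)) = 0 := by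
    have e : (b0 * (∑ i : ZMod M, ∑ j : ZMod M, (u i j - v i j) * (u i j - v i j)) + b1 * (∑ i : ZMod M, ∑ j : ZMod M, (v i j - w i j) * (u i j - v i j))) + ε * (∑ i : ZMod M, ∑ j : ZMod M, lap M h (lap M h u) i j * (u i j - v i j)) + (∑ i : ZMod M, ∑ j : ZMod M, divf M h u i j * (u i j - v i j))
        = ∑ i : ZMod M, ∑ j : ZMod M, (((b0 * ((u i j - v i j) * (u i j - v i j)) + b1 * ((v i j - w i j) * (u i j - v i j))) + ε * (lap M h (lap M h u) i j * (u i j - v i j))) + divf M h u i j * (u i j - v i j)) := by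
      simp only [← sum2_cmul, ← sum2_add]
    rw [e, sum2_congr (g := fun _ _ => (0:ℝ)) hps]
    simp
  have h2 : (∑ i : ZMod M, ∑ j : ZMod M, lap M h (lap M h u) i j * (u i j - v i j)) = (∑ i : ZMod M, ∑ j : ZMod M, lap M h u i j * (lap M h u i j - lap M h v i j)) := by
    refine (lap_adj h (lap M h u) (fun i j => u i j - v i j)).trans ?_
    exact sum2_congr fun i j => by simp only [lap, Dxx, Dyy]; ring
  have hdivf : (∑ i : ZMod M, ∑ j : ZMod M, divf M h u i j * (u i j - v i j)) = -(∑ i : ZMod M, ∑ j : ZMod M, (Dx M h u i j / (1 + Dx M h u i j ^ 2 + Dy M h u i j ^ 2) * (Dx M h u i j - Dx M h v i j) + Dy M h u i j / (1 + Dx M h u i j ^ 2 + Dy M h u i j ^ 2) * (Dy M h u i j - Dy M h v i j))) := by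
    have tx : ∑ i : ZMod M, ∑ j : ZMod M, Dx M h (fun a b => Dx M h u a b / (1 + Dx M h u a b ^ 2 + Dy M h u a b ^ 2)) i j * (u i j - v i j)
        = -∑ i : ZMod M, ∑ j : ZMod M, (fun a b => Dx M h u a b / (1 + Dx M h u a b ^ 2 + Dy M h u a b ^ 2)) i j * Dx M h (fun i j => u i j - v i j) i j := Tdx h (fun a b => Dx M h u a b / (1 + Dx M h u a b ^ 2 + Dy M h u a b ^ 2)) (fun i j => u i j - v i j)
    have ty : ∑ i : ZMod M, ∑ j : ZMod M, Dy M h (fun a b => Dy M h u a b / (1 + Dx M h u a b ^ 2 + Dy M h u a b ^ 2)) i j * (u i j - v i j)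
        = -∑ i : ZMod M, ∑ j : ZMod M, (fun a b => Dy M h u a b / (1 + Dx M h u a b ^ 2 + Dy M h u a b ^ 2)) i j * Dy M h (fun i j => u i j - v i j) i j := Tdy h (fun a b => Dy M h u a b / (1 + Dx M h u a b ^ 2 + Dy M h u a b ^ 2)) (fun i j => u i j - v i j)
    calc (∑ i : ZMod M, ∑ j : ZMod M, divf M h u i j * (u i j - v i j)) = (∑ i : ZMod M, ∑ j : ZMod M, Dx M h (fun a b => Dx M h u a b / (1 + Dx M h u a b ^ 2 + Dy M h u a b ^ 2)) i j * (u i j - v i j))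
          + ∑ i : ZMod M, ∑ j : ZMod M, Dy M h (fun a b => Dy M h u a b / (1 + Dx M h u a b ^ 2 + Dy M h u a b ^ 2)) i j * (u i j - v i j) := by
            rw [← sum2_add]
            exact sum2_congr fun i j => by simp only [divf]; ring
      _ = -(∑ i : ZMod M, ∑ j : ZMod M, (fun a b => Dx M h u a b / (1 + Dx M h u a b ^ 2 + Dy M h u a b ^ 2)) i j * Dx M h (fun i j => u i j - v i j) i j)
          + -(∑ i : ZMod M, ∑ j : ZMod M, (fun a b => Dy M h u a b / (1 + Dx M h u a b ^ 2 + Dy M h u a b ^ 2)) i j * Dy M h (fun i j => u i j - v i j) i j) := by rw [tx, ty]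
      _ = -(∑ i : ZMod M, ∑ j : ZMod M, (Dx M h u i j / (1 + Dx M h u i j ^ 2 + Dy M h u i j ^ 2) * (Dx M h u i j - Dx M h v i j) + Dy M h u i j / (1 + Dx M h u i j ^ 2 + Dy M h u i j ^ 2) * (Dy M h u i j - Dy M h v i j))) := by
            rw [← neg_add, ← sum2_add]
            exact congrArg Neg.neg (sum2_congr fun i j => by simp only [Dx, Dy]; ring)
  have hquad : 2 * (∑ i : ZMod M, ∑ j : ZMod M, lap M h u i j * (lap M h u i j - lap M h v i j)) = (∑ i : ZMod M, ∑ j : ZMod M, lap M h u i j * lap M h u i j) - (∑ i : ZMod M, ∑ j : ZMod M, lap M h v i j * lap M h v i j) + (∑ i : ZMod M, ∑ j : ZMod M, (lap M h u i j - lap M h v i j) * (lap M h u i j - lap M h v i j)) := by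
    rw [← sum2_cmul, ← sum2_sub, ← sum2_add]
    exact sum2_congr fun i j => by ring
  have hlogs : (∑ i : ZMod M, ∑ j : ZMod M, Real.log (1 + Dx M h v i j ^ 2 + Dy M h v i j ^ 2)) - (∑ i : ZMod M, ∑ j : ZMod M, Real.log (1 + Dx M h u i j ^ 2 + Dy M h u i j ^ 2)) ≤ (-2) * (∑ i : ZMod M, ∑ j : ZMod M, (Dx M h u i j / (1 + Dx M h u i j ^ 2 + Dy M h u i j ^ 2) * (Dx M h u i j - Dx M h v i j) + Dy M h u i j / (1 + Dx M h u i j ^ 2 + Dy M h u i j ^ 2) * (Dy M h u i j - Dy M h v i j))) + (∑ i : ZMod M, ∑ j : ZMod M, ((Dx M h u i j - Dx M h v i j) ^ 2 + (Dy M h u i j - Dy M h v i j) ^ 2)) := by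
    calc (∑ i : ZMod M, ∑ j : ZMod M, Real.log (1 + Dx M h v i j ^ 2 + Dy M h v i j ^ 2)) - (∑ i : ZMod M, ∑ j : ZMod M, Real.log (1 + Dx M h u i j ^ 2 + Dy M h u i j ^ 2))
        = ∑ i : ZMod M, ∑ j : ZMod M, (Real.log (1 + Dx M h v i j ^ 2 + Dy M h v i j ^ 2) - Real.log (1 + Dx M h u i j ^ 2 + Dy M h u i j ^ 2)) := (sum2_sub _ _).symm
      _ ≤ ∑ i : ZMod M, ∑ j : ZMod M, (-(2 * (Dx M h u i j / (1 + Dx M h u i j ^ 2 + Dy M h u i j ^ 2) * (Dx M h u i j - Dx M h v i j) + Dy M h u i j / (1 + Dx M h u i j ^ 2 + Dy M h u i j ^ 2) * (Dy M h u i j - Dy M h v i j))) + ((Dx M h u i j - Dx M h v i j) ^ 2 + (Dy M h u i j - Dy M h v i j) ^ 2)) := by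
            refine Finset.sum_le_sum fun i _ => Finset.sum_le_sum fun j _ => ?_
            exact logineq (Dx M h v i j) (Dy M h v i j) (Dx M h u i j) (Dy M h u i j)
      _ = (-2) * (∑ i : ZMod M, ∑ j : ZMod M, (Dx M h u i j / (1 + Dx M h u i j ^ 2 + Dy M h u i j ^ 2) * (Dx M h u i j - Dx M h v i j) + Dy M h u i j / (1 + Dx M h u i j ^ 2 + Dy M h u i j ^ 2) * (Dy M h u i j - Dy M h v i j))) + (∑ i : ZMod M, ∑ j : ZMod M, ((Dx M h u i j - Dx M h v i j) ^ 2 + (Dy M h u i j - Dy M h v i j) ^ 2)) := by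
            rw [← sum2_cmul, ← sum2_add]
            exact sum2_congr fun i j => by ring
  have hgradb : (∑ i : ZMod M, ∑ j : ZMod M, ((Dx M h u i j - Dx M h v i j) ^ 2 + (Dy M h u i j - Dy M h v i j) ^ 2)) ≤ ε * (∑ i : ZMod M, ∑ j : ZMod M, (lap M h u i j - lap M h v i j) * (lap M h u i j - lap M h v i j)) + (∑ i : ZMod M, ∑ j : ZMod M, (u i j - v i j) * (u i j - v i j)) / (4 * ε) := by
    calc (∑ i : ZMod M, ∑ j : ZMod M, ((Dx M h u i j - Dx M h v i j) ^ 2 + (Dy M h u i j - Dy M h v i j) ^ 2)) = ∑ i : ZMod M, ∑ j : ZMod M, ((Dx M h (fun i j => u i j - v i j) i j) ^ 2 + (Dy M h (fun i j => u i j - v i j) i j) ^ 2) := by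
            exact sum2_congr fun i j => by simp only [Dx, Dy]; ring
      _ ≤ ∑ i : ZMod M, ∑ j : ZMod M, (-(lap M h (fun i j => u i j - v i j) i j) * (u i j - v i j)) := grad_bound hh (fun i j => u i j - v i j)
      _ ≤ ∑ i : ZMod M, ∑ j : ZMod M, (ε * ((lap M h u i j - lap M h v i j) * (lap M h u i j - lap M h v i j)) + ((u i j - v i j) * (u i j - v i j)) / (4 * ε)) := by
            refine Finset.sum_le_sum fun i _ => Finset.sum_le_sum fun j _ => ?_
            have hl : lap M h (fun i j => u i j - v i j) i j = lap M h u i j - lap M h v i j := by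
              simp only [lap, Dxx, Dyy]; ring
            rw [hl]
            have key : ε * ((lap M h u i j - lap M h v i j) * (lap M h u i j - lap M h v i j)) + ((u i j - v i j) * (u i j - v i j)) / (4 * ε)
                + (lap M h u i j - lap M h v i j) * (u i j - v i j)
                = (2 * ε * (lap M h u i j - lap M h v i j) + (u i j - v i j)) ^ 2 / (4 * ε) := by
              field_simp
              ring
            have hnn : (0:ℝ) ≤ (2 * ε * (lap M h u i j - lap M h v i j) + (u i j - v i j)) ^ 2 / (4 * ε) :=
              div_nonneg (sq_nonneg _) (by positivity)
            linarith [key, hnn]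
      _ = ε * (∑ i : ZMod M, ∑ j : ZMod M, (lap M h u i j - lap M h v i j) * (lap M h u i j - lap M h v i j)) + (∑ i : ZMod M, ∑ j : ZMod M, (u i j - v i j) * (u i j - v i j)) / (4 * ε) := by
            rw [← sum2_cmul, ← sum2_div, ← sum2_add]
  have hEnu : En M h ε u = ε / 2 * (h ^ 2 * (∑ i : ZMod M, ∑ j : ZMod M, lap M h u i j * lap M h u i j)) - h ^ 2 / 2 * (∑ i : ZMod M, ∑ j : ZMod M, Real.log (1 + Dx M h u i j ^ 2 + Dy M h u i j ^ 2)) := by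
    simp only [En, gip]
  have hEnv : En M h ε v = ε / 2 * (h ^ 2 * (∑ i : ZMod M, ∑ j : ZMod M, lap M h v i j * lap M h v i j)) - h ^ 2 / 2 * (∑ i : ZMod M, ∑ j : ZMod M, Real.log (1 + Dx M h v i j ^ 2 + Dy M h v i j ^ 2)) := by
    simp only [En, gip]
  have h1' : ε * (∑ i : ZMod M, ∑ j : ZMod M, lap M h u i j * (lap M h u i j - lap M h v i j)) = (∑ i : ZMod M, ∑ j : ZMod M, (Dx M h u i j / (1 + Dx M h u i j ^ 2 + Dy M h u i j ^ 2) * (Dx M h u i j - Dx M h v i j) + Dy M h u i j / (1 + Dx M h u i j ^ 2 + Dy M h u i j ^ 2) * (Dy M h u i j - Dy M h v i j))) - (b0 * (∑ i : ZMod M, ∑ j : ZMod M, (u i j - v i j) * (u i j - v i j)) + b1 * (∑ i : ZMod M, ∑ j : ZMod M, (v i j - w i j) * (u i j - v i j))) := by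
    rw [h2, hdivf] at h1
    linarith [h1]
  have hquade : ε * (∑ i : ZMod M, ∑ j : ZMod M, lap M h u i j * (lap M h u i j - lap M h v i j)) = ε / 2 * (∑ i : ZMod M, ∑ j : ZMod M, lap M h u i j * lap M h u i j) - ε / 2 * (∑ i : ZMod M, ∑ j : ZMod M, lap M h v i j * lap M h v i j) + ε / 2 * (∑ i : ZMod M, ∑ j : ZMod M, (lap M h u i j - lap M h v i j) * (lap M h u i j - lap M h v i j)) := by
    linear_combination (ε / 2) * hquad
  have h6' : (∑ i : ZMod M, ∑ j : ZMod M, ((Dx M h u i j - Dx M h v i j) ^ 2 + (Dy M h u i j - Dy M h v i j) ^ 2)) / 2 ≤ ε / 2 * (∑ i : ZMod M, ∑ j : ZMod M, (lap M h u i j - lap M h v i j) * (lap M h u i j - lap M h v i j)) + (∑ i : ZMod M, ∑ j : ZMod M, (u i j - v i j) * (u i j - v i j)) / (8 * ε) := by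
    have e1 : ε / 2 * (∑ i : ZMod M, ∑ j : ZMod M, (lap M h u i j - lap M h v i j) * (lap M h u i j - lap M h v i j)) = (ε * (∑ i : ZMod M, ∑ j : ZMod M, (lap M h u i j - lap M h v i j) * (lap M h u i j - lap M h v i j))) / 2 := by ring
    have e2 : (∑ i : ZMod M, ∑ j : ZMod M, (u i j - v i j) * (u i j - v i j)) / (4 * ε) / 2 = (∑ i : ZMod M, ∑ j : ZMod M, (u i j - v i j) * (u i j - v i j)) / (8 * ε) := by
      rw [div_div, show (4:ℝ) * ε * 2 = 8 * ε from by ring]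
    linarith [hgradb, e1, e2]
  have main2 : ε / 2 * (∑ i : ZMod M, ∑ j : ZMod M, lap M h u i j * lap M h u i j) - ε / 2 * (∑ i : ZMod M, ∑ j : ZMod M, lap M h v i j * lap M h v i j) + ((∑ i : ZMod M, ∑ j : ZMod M, Real.log (1 + Dx M h v i j ^ 2 + Dy M h v i j ^ 2)) - (∑ i : ZMod M, ∑ j : ZMod M, Real.log (1 + Dx M h u i j ^ 2 + Dy M h u i j ^ 2))) / 2
      ≤ -(b0 * (∑ i : ZMod M, ∑ j : ZMod M, (u i j - v i j) * (u i j - v i j)) + b1 * (∑ i : ZMod M, ∑ j : ZMod M, (v i j - w i j) * (u i j - v i j))) + (∑ i : ZMod M, ∑ j : ZMod M, (u i j - v i j) * (u i j - v i j)) / (8 * ε) := by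
    linarith [h1', hquade, hlogs, h6']
  calc En M h ε u - En M h ε v
      = h ^ 2 * (ε / 2 * (∑ i : ZMod M, ∑ j : ZMod M, lap M h u i j * lap M h u i j) - ε / 2 * (∑ i : ZMod M, ∑ j : ZMod M, lap M h v i j * lap M h v i j) + ((∑ i : ZMod M, ∑ j : ZMod M, Real.log (1 + Dx M h v i j ^ 2 + Dy M h v i j ^ 2)) - (∑ i : ZMod M, ∑ j : ZMod M, Real.log (1 + Dx M h u i j ^ 2 + Dy M h u i j ^ 2))) / 2) := by
        rw [hEnu, hEnv]; ring
    _ ≤ h ^ 2 * (-(b0 * (∑ i : ZMod M, ∑ j : ZMod M, (u i j - v i j) * (u i j - v i j)) + b1 * (∑ i : ZMod M, ∑ j : ZMod M, (v i j - w i j) * (u i j - v i j))) + (∑ i : ZMod M, ∑ j : ZMod M, (u i j - v i j) * (u i j - v i j)) / (8 * ε)) :=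
        mul_le_mul_of_nonneg_left main2 (sq_nonneg h)
lemma D2g_eq {M : ℕ} [NeZero M] (τ r : ℕ → ℝ) (φ : ℕ → ZMod M → ZMod M → ℝ)
    (n : ℕ) (hn : 1 ≤ n) (i j : ZMod M) :
    D2g M τ r φ n i j
      = bk τ r n 0 * (φ n i j - φ (n - 1) i j)
        + bk τ r n 1 * (φ (n - 1) i j - φ (n - 2) i j) := by
  rcases eq_or_lt_of_le hn with h1 | h2
  · have hn1 : n = 1 := h1.symm
    subst hn1
    simp [D2g]
  · have h2' : 2 ≤ n := h2
    have hsub : ({n - 1, n} : Finset ℕ) ⊆ Finset.Icc 1 n := by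
      intro k hk
      simp only [Finset.mem_insert, Finset.mem_singleton] at hk
      rcases hk with rfl | rfl <;> simp only [Finset.mem_Icc] <;> omega
    have hz : ∀ k ∈ Finset.Icc 1 n, k ∉ ({n - 1, n} : Finset ℕ) →
        bk τ r n (n - k) * (φ k i j - φ (k - 1) i j) = 0 := by
      intro k hk hks
      simp only [Finset.mem_Icc] at hk
      simp only [Finset.mem_insert, Finset.mem_singleton] at hks
      push_neg at hks
      have e0 : n - k ≠ 0 := by omega
      have e1 : n - k ≠ 1 := by omega
      simp [bk, e0, e1]
    have hD : D2g M τ r φ n i j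
        = ∑ k ∈ ({n - 1, n} : Finset ℕ), bk τ r n (n - k) * (φ k i j - φ (k - 1) i j) := by
      simp only [D2g]
      exact (Finset.sum_subset hsub hz).symm
    rw [hD, Finset.sum_insert (by simp only [Finset.mem_singleton]; omega),
      Finset.sum_singleton]
    have e1 : n - (n - 1) = 1 := by omega
    have e2 : n - n = 0 := by omega
    have e3 : n - 1 - 1 = n - 2 := by omega
    rw [e1, e2, e3]
    ring
theorem stmt16 (L : ℝ) (hL : 0 < L) (M : ℕ) [NeZero M] (h : ℝ) (hh : h = L / M)
    (ε : ℝ) (hε : 0 < ε) (N : ℕ) (hN : 1 ≤ N) (τ r : ℕ → ℝ)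
    (hτ : ∀ k, 1 ≤ k → k ≤ N → 0 < τ k)
    (hr1 : r 1 = 0)
    (hr : ∀ k, 2 ≤ k → k ≤ N → r k = τ k / τ (k - 1))
    (hratio : ∀ k, 2 ≤ k → k ≤ N → 0 < r k ∧ r k < (3 + Real.sqrt 17) / 2)
    (hrN1 : 0 ≤ r (N + 1)) (hrN1s : r (N + 1) < (3 + Real.sqrt 17) / 2)
    (hstep : ∀ n, 1 ≤ n → n ≤ N →
      τ n ≤ 4 * ε * min 1
        ((2 + 4 * r n - (r n) ^ 2) / (1 + r n) - r (n + 1) / (1 + r (n + 1))))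
    (φ : ℕ → ZMod M → ZMod M → ℝ)
    (hscheme : ∀ n, 1 ≤ n → n ≤ N → ∀ i j : ZMod M,
      D2g M τ r φ n i j + ε * lap M h (lap M h (φ n)) i j + divf M h (φ n) i j = 0) :
    ∀ n, 1 ≤ n → n ≤ N →
      calE M h ε τ r φ n ≤ calE M h ε τ r φ (n - 1)
        ∧ calE M h ε τ r φ n ≤ En M h ε (φ 0) := by
  have hMpos : 0 < (M:ℝ) := by exact_mod_cast Nat.pos_of_ne_zero (NeZero.ne M)
  have hhpos : 0 < h := by rw [hh]; positivity
  have hhne : h ≠ 0 := ne_of_gt hhpos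
  have key : ∀ n, 1 ≤ n → n ≤ N →
      calE M h ε τ r φ n ≤ calE M h ε τ r φ (n - 1) := by
    intro n hn1 hnN
    have hτn : 0 < τ n := hτ n hn1 hnN
    have hτnne : τ n ≠ 0 := ne_of_gt hτn
    have hrn : 0 ≤ r n := by
      rcases eq_or_lt_of_le hn1 with h1 | h2
      · rw [← h1, hr1]
      · exact (hratio n h2 hnN).1.le
    have hrn1 : 0 ≤ r (n + 1) := by
      rcases eq_or_lt_of_le hnN with h1 | h2
      · rw [h1]; exact hrN1
      · exact (hratio (n + 1) (by omega) (by omega)).1.le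
    have h1rn : (0:ℝ) < 1 + r n := by linarith
    have h1rn1 : (0:ℝ) < 1 + r (n + 1) := by linarith
    have h1rnne : (1 + r n) ≠ 0 := ne_of_gt h1rn
    have h1rn1ne : (1 + r (n + 1)) ≠ 0 := ne_of_gt h1rn1
    have hsch : ∀ i j : ZMod M,
        (bk τ r n 0 * (φ n i j - φ (n - 1) i j)
          + bk τ r n 1 * (φ (n - 1) i j - φ (n - 2) i j))
          + ε * lap M h (lap M h (φ n)) i j + divf M h (φ n) i j = 0 := by
      intro i j
      rw [← D2g_eq τ r φ n hn1 i j]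
      exact hscheme n hn1 hnN i j
    have O := onestep hhne hε (φ n) (φ (n - 1)) (φ (n - 2)) (bk τ r n 0) (bk τ r n 1) hsch
    have hSQ : 0 ≤ ∑ i : ZMod M, ∑ j : ZMod M, (φ n i j - φ (n - 1) i j) * (φ n i j - φ (n - 1) i j) :=
      Finset.sum_nonneg fun i _ => Finset.sum_nonneg fun j _ => mul_self_nonneg _
    have hSQp : 0 ≤ ∑ i : ZMod M, ∑ j : ZMod M, (φ (n - 1) i j - φ (n - 2) i j) * (φ (n - 1) i j - φ (n - 2) i j) :=
      Finset.sum_nonneg fun i _ => Finset.sum_nonneg fun j _ => mul_self_nonneg _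
    have hSR : 2 * (∑ i : ZMod M, ∑ j : ZMod M, (φ (n - 1) i j - φ (n - 2) i j) * (φ n i j - φ (n - 1) i j)) ≤ (∑ i : ZMod M, ∑ j : ZMod M, (φ n i j - φ (n - 1) i j) * (φ n i j - φ (n - 1) i j)) + (∑ i : ZMod M, ∑ j : ZMod M, (φ (n - 1) i j - φ (n - 2) i j) * (φ (n - 1) i j - φ (n - 2) i j)) := by
      have pt : ∑ i : ZMod M, ∑ j : ZMod M, (2 * ((φ (n - 1) i j - φ (n - 2) i j) * (φ n i j - φ (n - 1) i j)))
          ≤ ∑ i : ZMod M, ∑ j : ZMod M, ((φ n i j - φ (n - 1) i j) * (φ n i j - φ (n - 1) i j) + (φ (n - 1) i j - φ (n - 2) i j) * (φ (n - 1) i j - φ (n - 2) i j)) := by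
        refine Finset.sum_le_sum fun i _ => Finset.sum_le_sum fun j _ => ?_
        nlinarith [sq_nonneg ((φ n i j - φ (n - 1) i j) - (φ (n - 1) i j - φ (n - 2) i j))]
      rw [sum2_cmul, sum2_add] at pt
      linarith [pt]
    have hb0 : bk τ r n 0 = (1 + 2 * r n) / (τ n * (1 + r n)) := by simp [bk]
    have hb1 : bk τ r n 1 = -(r n) ^ 2 / (τ n * (1 + r n)) := by simp [bk]
    have hb1np : bk τ r n 1 ≤ 0 := by
      rw [hb1]
      exact div_nonpos_of_nonpos_of_nonneg (neg_nonpos.mpr (sq_nonneg _))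
        (le_of_lt (mul_pos hτn h1rn))
    have hkp : r n / (2 * (1 + r n) * τ (n - 1)) = r n ^ 2 / (2 * (1 + r n) * τ n) := by
      rcases eq_or_lt_of_le hn1 with h1 | h2
      · rw [← h1]
        norm_num [hr1]
      · have hτp : 0 < τ (n - 1) := hτ (n - 1) (by omega) (by omega)
        have hrr := hr n h2 hnN
        rw [hrr]
        field_simp
    have hb1k : bk τ r n 1 = -(2 * (r n / (2 * (1 + r n) * τ (n - 1)))) := by
      rw [hb1, hkp]
      field_simp
    have hstep' : τ n ≤ 4 * ε * ((2 + 4 * r n - r n ^ 2) / (1 + r n) - r (n + 1) / (1 + r (n + 1))) :=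
      (hstep n hn1 hnN).trans
        (mul_le_mul_of_nonneg_left (min_le_right _ _) (by positivity))
    have hcoef : (r n / (2 * (1 + r n) * τ (n - 1))) + (r (n + 1) / (2 * (1 + r (n + 1)) * τ n)) + 1 / (8 * ε) ≤ bk τ r n 0 := by
      have k1 : 1 / (8 * ε) ≤ ((2 + 4 * r n - r n ^ 2) / (1 + r n) - r (n + 1) / (1 + r (n + 1))) / (2 * τ n) := by
        rw [div_le_div_iff₀ (by positivity) (by positivity)]
        nlinarith [hstep']
      have k2 : ((2 + 4 * r n - r n ^ 2) / (1 + r n) - r (n + 1) / (1 + r (n + 1))) / (2 * τ n)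
          = ((2 + 4 * r n - r n ^ 2) / (1 + r n)) / (2 * τ n) - (r (n + 1) / (1 + r (n + 1))) / (2 * τ n) := sub_div _ _ _
      have k3 : bk τ r n 0 - (r n / (2 * (1 + r n) * τ (n - 1))) = ((2 + 4 * r n - r n ^ 2) / (1 + r n)) / (2 * τ n) := by
        rw [hb0, hkp]
        field_simp
        ring
      have k4 : (r (n + 1) / (2 * (1 + r (n + 1)) * τ n)) = (r (n + 1) / (1 + r (n + 1))) / (2 * τ n) := by
        rw [div_div, show (1 + r (n + 1)) * (2 * τ n) = 2 * (1 + r (n + 1)) * τ n from by ring]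
      linarith [k1, k2, k3, k4]
    have hn0 : n ≠ 0 := by omega
    have hcalEn : calE M h ε τ r φ n
        = En M h ε (φ n) + (r (n + 1) / (2 * (1 + r (n + 1)) * τ n)) * (h ^ 2 * (∑ i : ZMod M, ∑ j : ZMod M, (φ n i j - φ (n - 1) i j) * (φ n i j - φ (n - 1) i j))) := by
      simp only [calE, gip]
      rw [if_neg hn0]
    have hcalEp : calE M h ε τ r φ (n - 1)
        = En M h ε (φ (n - 1)) + (r n / (2 * (1 + r n) * τ (n - 1))) * (h ^ 2 * (∑ i : ZMod M, ∑ j : ZMod M, (φ (n - 1) i j - φ (n - 2) i j) * (φ (n - 1) i j - φ (n - 2) i j))) := by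
      rcases eq_or_lt_of_le hn1 with h1 | h2
      · rw [← h1]
        norm_num [calE, hr1]
      · have hn1' : n - 1 ≠ 0 := by omega
        simp only [calE, gip]
        rw [if_neg hn1']
        have e1 : n - 1 + 1 = n := by omega
        have e2 : n - 1 - 1 = n - 2 := by omega
        rw [e1, e2]
    rw [hcalEn, hcalEp]
    have t1 : bk τ r n 1 * (((∑ i : ZMod M, ∑ j : ZMod M, (φ n i j - φ (n - 1) i j) * (φ n i j - φ (n - 1) i j)) + (∑ i : ZMod M, ∑ j : ZMod M, (φ (n - 1) i j - φ (n - 2) i j) * (φ (n - 1) i j - φ (n - 2) i j))) / 2) ≤ bk τ r n 1 * (∑ i : ZMod M, ∑ j : ZMod M, (φ (n - 1) i j - φ (n - 2) i j) * (φ n i j - φ (n - 1) i j)) :=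
      mul_le_mul_of_nonpos_left (by linarith [hSR]) hb1np
    have t5 : bk τ r n 1 * (((∑ i : ZMod M, ∑ j : ZMod M, (φ n i j - φ (n - 1) i j) * (φ n i j - φ (n - 1) i j)) + (∑ i : ZMod M, ∑ j : ZMod M, (φ (n - 1) i j - φ (n - 2) i j) * (φ (n - 1) i j - φ (n - 2) i j))) / 2)
        = -((r n / (2 * (1 + r n) * τ (n - 1))) * (∑ i : ZMod M, ∑ j : ZMod M, (φ n i j - φ (n - 1) i j) * (φ n i j - φ (n - 1) i j))) - (r n / (2 * (1 + r n) * τ (n - 1))) * (∑ i : ZMod M, ∑ j : ZMod M, (φ (n - 1) i j - φ (n - 2) i j) * (φ (n - 1) i j - φ (n - 2) i j)) := by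
      rw [hb1k]; ring
    have t3 : (-(bk τ r n 0) + (r n / (2 * (1 + r n) * τ (n - 1))) + (r (n + 1) / (2 * (1 + r (n + 1)) * τ n)) + 1 / (8 * ε)) * (∑ i : ZMod M, ∑ j : ZMod M, (φ n i j - φ (n - 1) i j) * (φ n i j - φ (n - 1) i j)) ≤ 0 :=
      mul_nonpos_iff.mpr (Or.inr ⟨by linarith [hcoef], hSQ⟩)
    have t6 : (-(bk τ r n 0) + (r n / (2 * (1 + r n) * τ (n - 1))) + (r (n + 1) / (2 * (1 + r (n + 1)) * τ n)) + 1 / (8 * ε)) * (∑ i : ZMod M, ∑ j : ZMod M, (φ n i j - φ (n - 1) i j) * (φ n i j - φ (n - 1) i j))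
        = -(bk τ r n 0 * (∑ i : ZMod M, ∑ j : ZMod M, (φ n i j - φ (n - 1) i j) * (φ n i j - φ (n - 1) i j))) + (r n / (2 * (1 + r n) * τ (n - 1))) * (∑ i : ZMod M, ∑ j : ZMod M, (φ n i j - φ (n - 1) i j) * (φ n i j - φ (n - 1) i j)) + (r (n + 1) / (2 * (1 + r (n + 1)) * τ n)) * (∑ i : ZMod M, ∑ j : ZMod M, (φ n i j - φ (n - 1) i j) * (φ n i j - φ (n - 1) i j))
          + (∑ i : ZMod M, ∑ j : ZMod M, (φ n i j - φ (n - 1) i j) * (φ n i j - φ (n - 1) i j)) / (8 * ε) := by ring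
    have inner : (-(bk τ r n 0 * (∑ i : ZMod M, ∑ j : ZMod M, (φ n i j - φ (n - 1) i j) * (φ n i j - φ (n - 1) i j)) + bk τ r n 1 * (∑ i : ZMod M, ∑ j : ZMod M, (φ (n - 1) i j - φ (n - 2) i j) * (φ n i j - φ (n - 1) i j))) + (∑ i : ZMod M, ∑ j : ZMod M, (φ n i j - φ (n - 1) i j) * (φ n i j - φ (n - 1) i j)) / (8 * ε))
        + (r (n + 1) / (2 * (1 + r (n + 1)) * τ n)) * (∑ i : ZMod M, ∑ j : ZMod M, (φ n i j - φ (n - 1) i j) * (φ n i j - φ (n - 1) i j)) - (r n / (2 * (1 + r n) * τ (n - 1))) * (∑ i : ZMod M, ∑ j : ZMod M, (φ (n - 1) i j - φ (n - 2) i j) * (φ (n - 1) i j - φ (n - 2) i j)) ≤ 0 := by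
      linarith [t1, t5, t3, t6]
    have hfin : h ^ 2 * (-(bk τ r n 0 * (∑ i : ZMod M, ∑ j : ZMod M, (φ n i j - φ (n - 1) i j) * (φ n i j - φ (n - 1) i j)) + bk τ r n 1 * (∑ i : ZMod M, ∑ j : ZMod M, (φ (n - 1) i j - φ (n - 2) i j) * (φ n i j - φ (n - 1) i j))) + (∑ i : ZMod M, ∑ j : ZMod M, (φ n i j - φ (n - 1) i j) * (φ n i j - φ (n - 1) i j)) / (8 * ε))
        + (r (n + 1) / (2 * (1 + r (n + 1)) * τ n)) * (h ^ 2 * (∑ i : ZMod M, ∑ j : ZMod M, (φ n i j - φ (n - 1) i j) * (φ n i j - φ (n - 1) i j))) - (r n / (2 * (1 + r n) * τ (n - 1))) * (h ^ 2 * (∑ i : ZMod M, ∑ j : ZMod M, (φ (n - 1) i j - φ (n - 2) i j) * (φ (n - 1) i j - φ (n - 2) i j))) ≤ 0 := by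
      have e : h ^ 2 * (-(bk τ r n 0 * (∑ i : ZMod M, ∑ j : ZMod M, (φ n i j - φ (n - 1) i j) * (φ n i j - φ (n - 1) i j)) + bk τ r n 1 * (∑ i : ZMod M, ∑ j : ZMod M, (φ (n - 1) i j - φ (n - 2) i j) * (φ n i j - φ (n - 1) i j))) + (∑ i : ZMod M, ∑ j : ZMod M, (φ n i j - φ (n - 1) i j) * (φ n i j - φ (n - 1) i j)) / (8 * ε))
          + (r (n + 1) / (2 * (1 + r (n + 1)) * τ n)) * (h ^ 2 * (∑ i : ZMod M, ∑ j : ZMod M, (φ n i j - φ (n - 1) i j) * (φ n i j - φ (n - 1) i j))) - (r n / (2 * (1 + r n) * τ (n - 1))) * (h ^ 2 * (∑ i : ZMod M, ∑ j : ZMod M, (φ (n - 1) i j - φ (n - 2) i j) * (φ (n - 1) i j - φ (n - 2) i j)))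
          = h ^ 2 * ((-(bk τ r n 0 * (∑ i : ZMod M, ∑ j : ZMod M, (φ n i j - φ (n - 1) i j) * (φ n i j - φ (n - 1) i j)) + bk τ r n 1 * (∑ i : ZMod M, ∑ j : ZMod M, (φ (n - 1) i j - φ (n - 2) i j) * (φ n i j - φ (n - 1) i j))) + (∑ i : ZMod M, ∑ j : ZMod M, (φ n i j - φ (n - 1) i j) * (φ n i j - φ (n - 1) i j)) / (8 * ε))
              + (r (n + 1) / (2 * (1 + r (n + 1)) * τ n)) * (∑ i : ZMod M, ∑ j : ZMod M, (φ n i j - φ (n - 1) i j) * (φ n i j - φ (n - 1) i j)) - (r n / (2 * (1 + r n) * τ (n - 1))) * (∑ i : ZMod M, ∑ j : ZMod M, (φ (n - 1) i j - φ (n - 2) i j) * (φ (n - 1) i j - φ (n - 2) i j))) := by ring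
      rw [e]
      exact mul_nonpos_iff.mpr (Or.inl ⟨sq_nonneg h, inner⟩)
    linarith [O, hfin]
  have h0 : calE M h ε τ r φ 0 = En M h ε (φ 0) := by simp [calE]
  have mono : ∀ n, n ≤ N → calE M h ε τ r φ n ≤ calE M h ε τ r φ 0 := by
    intro n
    induction n with
    | zero => intro _; exact le_refl _
    | succ m ih =>
        intro hm
        have h2 := key (m + 1) (by omega) hm
        simp only [Nat.add_sub_cancel] at h2
        exact h2.trans (ih (by omega))
  intro n hn1 hnN
  refine ⟨key n hn1 hnN, ?_⟩
  rw [← h0]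
  exact mono n hnN
end
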